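/- arXiv:0808.0294 — 7 statements merged into one kernel-verified Lean document; each statement's English description precedes it below -/
import Mathlib

section
/- Let q : (ℤ/2ℤ)^5 → ℚ/2ℤ be defined by q(x) = -wt(x)/2 mod 2ℤ, where wt(x) is the number of nonzero coordinates (this is the discriminant form q_T of T = U⊕U⊕E_8⊕A_1^5). Then the group O(q) of additive automorphisms f of (ℤ/2ℤ)^5 satisfying q(f(x)) = q(x) for all x consists exactly of the coordinate permutations, and hence O(q) is isomorphic to the symmetric group S_5 (i.e. to Equiv.Perm (Fin 5)). -/
/-- Hamming weight: the number of nonzero coordinates of a vector in `(ℤ/2ℤ)⁵`. -/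
def wt (v : Fin 5 → ZMod 2) : ℕ := (Finset.univ.filter fun i => v i ≠ 0).card

/-- The discriminant quadratic form of `T = U ⊕ U ⊕ E₈ ⊕ A₁⁵` on `(ℤ/2ℤ)⁵`:
`q(x) = -wt(x)/2 mod 2ℤ`, with values in `ℚ/2ℤ`. -/
def q (v : Fin 5 → ZMod 2) : AddCircle (2 : ℚ) := ((-(wt v : ℚ) / 2 : ℚ) : AddCircle (2 : ℚ))

/-- Mathlib now makes `AddAut` an additive group; restore the old multiplicative group
structure (composition) that this file used. -/
instance : Group (AddAut (Fin 5 → ZMod 2)) :=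
  inferInstanceAs (Group (Multiplicative (AddAut (Fin 5 → ZMod 2))))

/-- The group `O(q)` of additive automorphisms of `(ℤ/2ℤ)⁵` preserving `q`. -/
def Oq : Subgroup (AddAut (Fin 5 → ZMod 2)) where
  carrier := {f | ∀ x, q (f x) = q x}
  one_mem' := fun _ => rfl
  mul_mem' := by
    intro a b ha hb x
    have : (a * b) x = a (b x) := rfl
    rw [this, ha (b x), hb x]
  inv_mem' := by
    intro a ha x
    have h := ha (a⁻¹ x)
    have : a (a⁻¹ x) = x := by
      show a (a.symm x) = x
      exact a.apply_symm_apply x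
    rw [this] at h
    exact h.symm

lemma qcong {v w : Fin 5 → ZMod 2} (h : q v = q w) : ((wt v : ℕ) : ZMod 4) = wt w := by
  have h2 : (-(wt v : ℚ)/2) - (-(wt w : ℚ)/2) ∈ AddSubgroup.zmultiples (2:ℚ) := by
    have := (QuotientAddGroup.eq (s := AddSubgroup.zmultiples (2:ℚ))).mp h
    simpa [neg_add_eq_sub] using (AddSubgroup.neg_mem _ this)
  obtain ⟨k, hk⟩ := AddSubgroup.mem_zmultiples_iff.mp h2
  have hk' : (wt w : ℚ) - wt v = 4 * k := by
    rw [zsmul_eq_mul] at hk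
    field_simp at hk ⊢
    linarith
  have hz : (wt w : ℤ) - wt v = 4 * k := by exact_mod_cast hk'
  rw [ZMod.natCast_eq_natCast_iff]
  exact (Nat.modEq_iff_dvd).mpr ⟨k, hz⟩

lemma wt_perm (σ : Equiv.Perm (Fin 5)) (x : Fin 5 → ZMod 2) : wt (fun i => x (σ i)) = wt x := by
  unfold wt
  apply Finset.card_bij' (fun a _ => σ a) (fun b _ => σ.symm b) <;> simp

lemma q_perm (σ : Equiv.Perm (Fin 5)) (x : Fin 5 → ZMod 2) : q (fun i => x (σ i)) = q x := by
  unfold q; rw [wt_perm]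

lemma wt_key : ∀ u w : Fin 5 → ZMod 2, u ≠ w → (wt u : ZMod 4) = 1 → (wt w : ZMod 4) = 1 →
    (wt (u + w) : ZMod 4) = 2 → wt u = 1 := by decide

lemma wt_single : ∀ i : Fin 5, (wt (Pi.single i (1 : ZMod 2)) : ZMod 4) = 1 := by decide

lemma wt_pair : ∀ i k : Fin 5, i ≠ k →
    (wt (Pi.single i (1 : ZMod 2) + Pi.single k 1) : ZMod 4) = 2 := by decide

lemma single_inj : ∀ i k : Fin 5, (Pi.single i (1 : ZMod 2) : Fin 5 → ZMod 2) = Pi.single k 1 → i = k := by decide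

lemma wt_one_exists : ∀ v : Fin 5 → ZMod 2, wt v = 1 → ∃ j, v = Pi.single j 1 := by decide

/-- coordinate permutation as an additive automorphism -/
def permAut (σ : Equiv.Perm (Fin 5)) : AddAut (Fin 5 → ZMod 2) where
  toFun x := fun i => x (σ i)
  invFun x := fun i => x (σ.symm i)
  left_inv x := by funext i; simp
  right_inv x := by funext i; simp
  map_add' x y := rfl

lemma oq_perm_form (f : AddAut (Fin 5 → ZMod 2))
    (hf : ∀ x, q (f x) = q x) :
    ∃ σ : Equiv.Perm (Fin 5), ∀ (x : Fin 5 → ZMod 2) (i : Fin 5), f x i = x (σ i) := by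
  have hcong : ∀ x, ((wt (f x) : ℕ) : ZMod 4) = wt x := fun x => qcong (hf x)
  have hinj : Function.Injective f := f.injective
  set e : Fin 5 → (Fin 5 → ZMod 2) := fun j => Pi.single j (1 : ZMod 2) with he
  have h1 : ∀ i, wt (f (e i)) = 1 := by
    intro i
    obtain ⟨k, hk⟩ := exists_ne i
    apply wt_key (f (e i)) (f (e k))
    · intro h
      exact hk (single_inj k i (hinj h).symm)
    · rw [hcong (e i)]; exact wt_single i
    · rw [hcong (e k)]; exact wt_single k
    · rw [← map_add, hcong (e i + e k)]; exact wt_pair i k (Ne.symm hk)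
  choose σ0 hσ0 using fun i => wt_one_exists _ (h1 i)
  have hσinj : Function.Injective σ0 := by
    intro i j h
    apply single_inj
    apply hinj
    rw [hσ0 i, hσ0 j, h]
  let σ : Equiv.Perm (Fin 5) := Equiv.ofBijective σ0 (Finite.injective_iff_bijective.mp hσinj)
  refine ⟨σ.symm, fun x i => ?_⟩
  have hx : f x = fun i => x (σ.symm i) := by
    have hsum : x = ∑ j, Pi.single j (x j) := (Finset.univ_sum_single x).symm
    calc f x = ∑ j, f (Pi.single j (x j)) := by
          conv_lhs => rw [hsum]
          exact map_sum f.toAddMonoidHom _ _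
    _ = ∑ j, Pi.single (σ0 j) (x j) := by
          refine Finset.sum_congr rfl fun j _ => ?_
          rcases (by decide : ∀ c : ZMod 2, c = 0 ∨ c = 1) (x j) with h | h
          · rw [h]; simp only [Pi.single_zero]; exact map_zero f.toAddMonoidHom
          · rw [h]; exact hσ0 j
    _ = ∑ j, Pi.single (σ0 (σ.symm j)) (x (σ.symm j)) :=
          (Fintype.sum_equiv σ.symm _ _ (fun j => rfl)).symm
    _ = ∑ j, Pi.single j (x (σ.symm j)) := by
          refine Finset.sum_congr rfl fun j _ => ?_
          have : σ0 (σ.symm j) = j := σ.apply_symm_apply j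
          rw [show σ0 (σ.symm j) = σ (σ.symm j) from rfl, σ.apply_symm_apply]
    _ = fun i => x (σ.symm i) := Finset.univ_sum_single _
  rw [hx]

/-- `O(q)` consists exactly of the coordinate permutations, hence `O(q) ≅ S₅`. -/
theorem Oq_eq_coordinate_permutations_and_iso_S5 :
    (∀ f : AddAut (Fin 5 → ZMod 2),
      f ∈ Oq ↔ ∃ σ : Equiv.Perm (Fin 5), ∀ (x : Fin 5 → ZMod 2) (i : Fin 5), f x i = x (σ i)) ∧
    Nonempty (Oq ≃* Equiv.Perm (Fin 5)) := by
  have hiff : ∀ f : AddAut (Fin 5 → ZMod 2),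
      f ∈ Oq ↔ ∃ σ : Equiv.Perm (Fin 5), ∀ (x : Fin 5 → ZMod 2) (i : Fin 5), f x i = x (σ i) := by
    intro f
    constructor
    · exact fun hf => oq_perm_form f hf
    · rintro ⟨σ, hσ⟩ x
      have : f x = fun i => x (σ i) := funext (hσ x)
      rw [this]
      exact q_perm σ x
  refine ⟨hiff, ?_⟩
  have hmem : ∀ σ : Equiv.Perm (Fin 5), permAut σ ∈ Oq := fun σ x => q_perm σ x
  let φ : Equiv.Perm (Fin 5) →* Oq :=
  { toFun := fun σ => ⟨permAut σ⁻¹, hmem σ⁻¹⟩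
    map_one' := by
      apply Subtype.ext
      apply AddEquiv.ext
      intro x
      rfl
    map_mul' := by
      intro σ τ
      apply Subtype.ext
      apply AddEquiv.ext
      intro x
      funext i
      show x ((σ * τ)⁻¹ i) = x (τ⁻¹ (σ⁻¹ i))
      rw [mul_inv_rev, Equiv.Perm.mul_apply] }
  have hinj : Function.Injective φ := by
    intro σ τ h
    have h' : ∀ (x : Fin 5 → ZMod 2) (i : Fin 5), x (σ⁻¹ i) = x (τ⁻¹ i) := by
      intro x i
      exact congrFun (congrArg (fun g : Oq => (g : AddAut (Fin 5 → ZMod 2)) x) h) i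
    have : σ⁻¹ = τ⁻¹ := by
      apply Equiv.ext
      intro i
      by_contra hne
      have := h' (Pi.single (σ⁻¹ i) (1 : ZMod 2)) i
      rw [Pi.single_eq_same, Pi.single_eq_of_ne (fun hh => hne hh.symm)] at this
      exact one_ne_zero this
    exact inv_injective this
  have hsurj : Function.Surjective φ := by
    rintro ⟨f, hf⟩
    obtain ⟨σ, hσ⟩ := oq_perm_form f hf
    refine ⟨σ⁻¹, ?_⟩
    apply Subtype.ext
    apply AddEquiv.ext
    intro x
    funext i
    show x (σ⁻¹⁻¹ i) = f x i
    rw [inv_inv, hσ x i]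
  exact ⟨(MulEquiv.ofBijective φ ⟨hinj, hsurj⟩).symm⟩
end

section
/- Let S = ℤ^5 with Gram matrix diag(2,-2,-2,-2,-2) (the lattice A_1(-1)⊕A_1^4). Then the natural homomorphism O(S) → O(q_S) is surjective: every additive automorphism of the discriminant group A_S = S*/S preserving the discriminant quadratic form q_S is induced by an isometry P of S (P ∈ GL(5,ℤ) with PᵀGP = G). In fact O(q_S) is generated by the permutations of the last four coordinates together with the automorphism induced by the isometry s_0 ↦ 2s_0-s_1-s_2-s_3, s_1 ↦ s_0-s_1-s_3, s_2 ↦ s_4, s_3 ↦ s_0-s_2-s_3, s_4 ↦ s_0-s_1-s_2 (where s_0,…,s_4 is the standard basis). -/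
open Matrix

/-- Gram matrix of `S = A₁(-1) ⊕ A₁⁴`. -/
def gramS : Matrix (Fin 5) (Fin 5) ℤ := Matrix.diagonal ![2, -2, -2, -2, -2]

/-- `P` is an isometry of the lattice `(ℤⁿ, G)`, i.e. `P ∈ GL(n, ℤ)` with `Pᵀ G P = G`. -/
def IsIsometry {n : ℕ} (G P : Matrix (Fin n) (Fin n) ℤ) : Prop :=
  IsUnit P.det ∧ Pᵀ * G * P = G

/-- The `ℚ`-bilinear form of a lattice with Gram matrix `G`. -/
def bfQ {n : ℕ} (G : Matrix (Fin n) (Fin n) ℤ) (x y : Fin n → ℚ) : ℚ :=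
  x ⬝ᵥ (G.map ((↑) : ℤ → ℚ)).mulVec y

/-- `ℤⁿ ⊆ ℚⁿ` as an additive subgroup. -/
def intLattice (n : ℕ) : AddSubgroup (Fin n → ℚ) :=
  AddSubgroup.pi Set.univ fun _ => AddSubgroup.zmultiples (1 : ℚ)

/-- The dual lattice `L* = {x ∈ ℚⁿ : B(x, ℤⁿ) ⊆ ℤ} = {x : Gx ∈ ℤⁿ}`. -/
def dualLattice {n : ℕ} (G : Matrix (Fin n) (Fin n) ℤ) : AddSubgroup (Fin n → ℚ) :=
  AddSubgroup.comap ((G.map ((↑) : ℤ → ℚ)).mulVecLin.toAddMonoidHom) (intLattice n)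

/-- The discriminant group `A_L = L*/L`. -/
def discGroup {n : ℕ} (G : Matrix (Fin n) (Fin n) ℤ) : Type :=
  (dualLattice G) ⧸ ((intLattice n).addSubgroupOf (dualLattice G))

instance {n : ℕ} (G : Matrix (Fin n) (Fin n) ℤ) : AddCommGroup (discGroup G) :=
  QuotientAddGroup.Quotient.addCommGroup _

/-- The class of a dual vector in the discriminant group. -/
def discCls {n : ℕ} (G : Matrix (Fin n) (Fin n) ℤ) (x : dualLattice G) : discGroup G :=
  QuotientAddGroup.mk x

/-- `f` is the automorphism of the discriminant group induced by the matrix `P`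
(sending the class of `x ∈ L*` to the class of `Px`). -/
def InducedBy {n : ℕ} (G P : Matrix (Fin n) (Fin n) ℤ) (f : AddAut (discGroup G)) : Prop :=
  ∀ x y : dualLattice G,
    (y : Fin n → ℚ) = (P.map ((↑) : ℤ → ℚ)).mulVec x → f (discCls G x) = discCls G y

/-- `f` preserves the discriminant quadratic form `q_S` (expressed on representatives). -/
def PreservesQ {n : ℕ} (G : Matrix (Fin n) (Fin n) ℤ) (f : AddAut (discGroup G)) : Prop :=
  ∀ x y : dualLattice G, f (discCls G x) = discCls G y →
    bfQ G y y - bfQ G x x ∈ AddSubgroup.zmultiples (2 : ℚ)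

/-- The matrix of the isometry `s₀ ↦ 2s₀-s₁-s₂-s₃, s₁ ↦ s₀-s₁-s₃, s₂ ↦ s₄,
s₃ ↦ s₀-s₂-s₃, s₄ ↦ s₀-s₁-s₂` of `S` (columns are the images of the basis vectors). -/
def P₀ : Matrix (Fin 5) (Fin 5) ℤ :=
  !![2, 1, 0, 1, 1;
    -1, -1, 0, 0, -1;
    -1, 0, 0, -1, -1;
    -1, -1, 0, -1, 0;
     0, 0, 1, 0, 0]

/-- The generating set: automorphisms of `A_S` induced by the permutations of the last
four coordinates, together with the automorphism induced by the isometry `P₀`. -/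
def genSet : Set (AddAut (discGroup gramS)) :=
  {f | ∃ σ : Equiv.Perm (Fin 5), σ 0 = 0 ∧
    ∀ x y : dualLattice gramS,
      ((y : Fin 5 → ℚ) = fun i => (x : Fin 5 → ℚ) (σ i)) → f (discCls gramS x) = discCls gramS y} ∪
  {f | InducedBy gramS P₀ f}

namespace OqS

lemma mem_int (v : Fin 5 → ℚ) : v ∈ intLattice 5 ↔ ∀ i, ∃ m : ℤ, (m : ℚ) = v i := by
  simp only [intLattice, AddSubgroup.mem_pi, Set.mem_univ, forall_true_left,
    AddSubgroup.mem_zmultiples_iff, zsmul_eq_mul, mul_one]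

lemma mem_dual (x : Fin 5 → ℚ) :
    x ∈ dualLattice gramS ↔ ∀ i, ∃ m : ℤ, (m : ℚ) = 2 * x i := by
  have hmap : (gramS.map ((↑) : ℤ → ℚ)) = Matrix.diagonal ![2,-2,-2,-2,-2] := by
    rw [gramS, Matrix.diagonal_map Int.cast_zero]
    apply congrArg Matrix.diagonal
    funext i
    fin_cases i <;> simp
  have key : ∀ i, ((gramS.map ((↑) : ℤ → ℚ)) *ᵥ x) i = ![2,-2,-2,-2,-2] i * x i := by
    intro i; rw [hmap, Matrix.mulVec_diagonal]
  have sgn : ∀ i : Fin 5, (![2,-2,-2,-2,-2] : Fin 5 → ℚ) i = 2 ∨ (![2,-2,-2,-2,-2] : Fin 5 → ℚ) i = -2 := by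
    intro i; fin_cases i <;> norm_num
  have gen : ∀ (c t : ℚ), (c = 2 ∨ c = -2) →
      ((∃ m : ℤ, (m : ℚ) = c * t) ↔ ∃ m : ℤ, (m : ℚ) = 2 * t) := by
    rintro c t (rfl | rfl)
    · rfl
    · constructor <;> rintro ⟨m, hm⟩ <;> exact ⟨-m, by push_cast; linarith⟩
  simp only [dualLattice, AddSubgroup.mem_comap, LinearMap.toAddMonoidHom_coe,
    Matrix.mulVecLin_apply, mem_int, key]
  exact forall_congr' fun i => gen _ _ (sgn i)

abbrev Vec := Fin 5 → ZMod 2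

lemma num_int {a : ℚ} {m : ℤ} (h : (m : ℚ) = a) : a.num = m := by
  rw [← h, Rat.num_intCast]

/-- The reduction map on the dual lattice. -/
def toV (x : dualLattice gramS) : Vec :=
  fun i => (((2 * (x : Fin 5 → ℚ) i).num : ℤ) : ZMod 2)

lemma toV_spec (x : dualLattice gramS) (n : Fin 5 → ℤ)
    (h : ∀ i, (n i : ℚ) = 2 * (x : Fin 5 → ℚ) i) :
    toV x = fun i => ((n i : ℤ) : ZMod 2) := by
  funext i
  rw [toV, num_int (h i)]

lemma exists_wit (x : dualLattice gramS) : ∃ n : Fin 5 → ℤ,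
    ∀ i, (n i : ℚ) = 2 * (x : Fin 5 → ℚ) i := by
  have := (mem_dual x).mp x.2
  choose n hn using this
  exact ⟨n, hn⟩

def phiZ : dualLattice gramS →+ Vec where
  toFun := toV
  map_zero' := by
    rw [toV_spec 0 (fun _ => 0) (by intro i; simp)]
    funext i; simp
  map_add' := by
    intro x y
    obtain ⟨n, hn⟩ := exists_wit x
    obtain ⟨m, hm⟩ := exists_wit y
    have hxy : ∀ i, ((n i + m i : ℤ) : ℚ) = 2 * ((x + y : dualLattice gramS) : Fin 5 → ℚ) i := by
      intro i
      push_cast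
      rw [hn i, hm i]
      simp only [Pi.add_apply]
      ring
    show toV (x + y) = toV x + toV y
    rw [toV_spec _ _ hxy, toV_spec _ _ hn, toV_spec _ _ hm]
    funext i
    push_cast
    rfl

lemma phiZ_ker (x : dualLattice gramS)
    (h : phiZ x = 0) : x ∈ (intLattice 5).addSubgroupOf (dualLattice gramS) := by
  obtain ⟨n, hn⟩ := exists_wit x
  have hv := toV_spec x n hn
  rw [AddSubgroup.mem_addSubgroupOf, mem_int]
  intro i
  have h2 : ((n i : ℤ) : ZMod 2) = 0 := by
    have h' : toV x = 0 := h
    have hcongr := congrFun (hv.symm.trans h') i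
    exact hcongr
  rw [ZMod.intCast_zmod_eq_zero_iff_dvd] at h2
  obtain ⟨k, hk⟩ := h2
  refine ⟨k, ?_⟩
  have := hn i
  rw [hk] at this
  push_cast at this
  linarith

/-- The induced map on the discriminant group. -/
def psi : discGroup gramS →+ Vec :=
  QuotientAddGroup.lift _ phiZ (by
    intro x hx
    rw [AddSubgroup.mem_addSubgroupOf, mem_int] at hx
    choose m hm using hx
    rw [AddMonoidHom.mem_ker]
    show toV x = 0
    rw [toV_spec x (fun i => 2 * m i)
      (by intro i; push_cast; rw [hm i])]
    funext i
    show ((2 * m i : ℤ) : ZMod 2) = 0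
    rw [ZMod.intCast_zmod_eq_zero_iff_dvd]
    exact ⟨m i, rfl⟩)

lemma psi_mk (x : dualLattice gramS) : psi (discCls gramS x) = toV x := rfl

lemma psi_bij : Function.Bijective psi := by
  constructor
  · rw [injective_iff_map_eq_zero]
    intro a ha
    obtain ⟨x, rfl⟩ := QuotientAddGroup.mk_surjective a
    rw [show QuotientAddGroup.mk x = discCls gramS x from rfl] at ha ⊢
    rw [discCls]
    show (QuotientAddGroup.mk x : (dualLattice gramS) ⧸ ((intLattice 5).addSubgroupOf (dualLattice gramS))) = 0
    rw [QuotientAddGroup.eq_zero_iff]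
    exact phiZ_ker x ha
  · intro v
    have hx : (fun i => (((v i).val : ℚ) / 2)) ∈ dualLattice gramS := by
      rw [mem_dual]
      intro i
      exact ⟨(v i).val, by push_cast; ring⟩
    refine ⟨discCls gramS ⟨_, hx⟩, ?_⟩
    rw [psi_mk, toV_spec _ (fun i => ((v i).val : ℤ)) (by intro i; push_cast; ring)]
    funext i
    simp [ZMod.natCast_val, ZMod.intCast_cast, ZMod.cast_id]

/-- The discriminant group is `(ℤ/2)⁵`. -/
noncomputable def eA : discGroup gramS ≃+ Vec := AddEquiv.ofBijective psi psi_bij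

lemma eA_mk (x : dualLattice gramS) : eA (discCls gramS x) = toV x := rfl

def c2 : ZMod 2 → ZMod 4 := fun a => if a = 0 then 0 else 1

def qF (v : Vec) : ZMod 4 := 2 * c2 (v 0) - ∑ i, c2 (v i)

lemma intSq (n : ℤ) : ((n * n : ℤ) : ZMod 4) = c2 ((n : ℤ) : ZMod 2) := by
  rcases Int.even_or_odd n with ⟨k, rfl⟩ | ⟨k, rfl⟩
  · have h2 : (((k + k) : ℤ) : ZMod 2) = 0 := by
      push_cast; ring_nf; rw [show ((2:ZMod 2)) = 0 from rfl]; ring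
    rw [h2, show c2 0 = 0 from rfl]
    push_cast
    ring_nf
    rw [show ((4 : ZMod 4)) = 0 from rfl]
    ring
  · have h2 : (((2*k + 1) : ℤ) : ZMod 2) = 1 := by
      push_cast; ring_nf; rw [show ((2:ZMod 2)) = 0 from rfl]; ring
    rw [h2, show c2 1 = 1 from rfl]
    push_cast
    ring_nf
    rw [show ((4 : ZMod 4)) = 0 from rfl]
    ring

/-- Integer value of the quadratic form on a dual vector with witness `n`. -/
def NQ (n : Fin 5 → ℤ) : ℤ :=
  n 0 * n 0 - (n 1 * n 1 + n 2 * n 2 + n 3 * n 3 + n 4 * n 4)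

lemma bfQ_val (x : dualLattice gramS) (n : Fin 5 → ℤ)
    (h : ∀ i, (n i : ℚ) = 2 * (x : Fin 5 → ℚ) i) :
    bfQ gramS (x : Fin 5 → ℚ) (x : Fin 5 → ℚ) = ((NQ n : ℤ) : ℚ) / 2 := by
  have hx : ∀ i, (x : Fin 5 → ℚ) i = (n i : ℚ) / 2 := by
    intro i; rw [h i]; ring
  have hmap : (gramS.map ((↑) : ℤ → ℚ)) = Matrix.diagonal ![2,-2,-2,-2,-2] := by
    rw [gramS, Matrix.diagonal_map Int.cast_zero]
    apply congrArg Matrix.diagonal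
    funext i
    fin_cases i <;> simp
  rw [bfQ, hmap]
  have key : ∀ i, ((Matrix.diagonal ![2,-2,-2,-2,-2] : Matrix (Fin 5) (Fin 5) ℚ) *ᵥ (x : Fin 5 → ℚ)) i
      = ![2,-2,-2,-2,-2] i * (x : Fin 5 → ℚ) i := fun i => Matrix.mulVec_diagonal _ _ _
  rw [dotProduct]
  rw [Fin.sum_univ_five]
  rw [key, key, key, key, key]
  rw [hx 0, hx 1, hx 2, hx 3, hx 4]
  rw [NQ]
  push_cast
  norm_num
  ring

lemma NQ_mod (x : dualLattice gramS) (n : Fin 5 → ℤ)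
    (h : ∀ i, (n i : ℚ) = 2 * (x : Fin 5 → ℚ) i) :
    ((NQ n : ℤ) : ZMod 4) = qF (toV x) := by
  rw [toV_spec x n h, qF, NQ]
  rw [Fin.sum_univ_five]
  show _ = 2 * c2 ((n 0 : ℤ) : ZMod 2) -
    (c2 ((n 0 : ℤ) : ZMod 2) + c2 ((n 1 : ℤ) : ZMod 2) + c2 ((n 2 : ℤ) : ZMod 2)
      + c2 ((n 3 : ℤ) : ZMod 2) + c2 ((n 4 : ℤ) : ZMod 2))
  rw [← intSq, ← intSq, ← intSq, ← intSq, ← intSq]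
  push_cast
  ring

lemma half_diff (N M : ℤ) :
    ((M : ℚ) / 2 - (N : ℚ) / 2 ∈ AddSubgroup.zmultiples (2 : ℚ)) ↔
      ((M : ℤ) : ZMod 4) = ((N : ℤ) : ZMod 4) := by
  rw [AddSubgroup.mem_zmultiples_iff]
  constructor
  · rintro ⟨k, hk⟩
    have hq : (M : ℚ) - (N : ℚ) = 4 * (k : ℚ) := by
      rw [zsmul_eq_mul] at hk
      linarith
    have hMN : M - N = 4 * k := by exact_mod_cast hq
    have h4 : ((M - N : ℤ) : ZMod 4) = 0 := by
      rw [hMN]; push_cast; rw [show ((4:ZMod 4)) = 0 from rfl]; ring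
    push_cast at h4
    linear_combination h4
  · intro hmn
    have : ((M - N : ℤ) : ZMod 4) = 0 := by push_cast; rw [hmn]; ring
    rw [ZMod.intCast_zmod_eq_zero_iff_dvd] at this
    obtain ⟨k, hk⟩ := this
    refine ⟨k, ?_⟩
    rw [zsmul_eq_mul]
    have : (M : ℚ) - N = 4 * k := by exact_mod_cast congrArg (fun z : ℤ => (z : ℚ)) hk
    linarith

/-- `f` preserves the (mod 2ℤ) quadratic form, expressed on `(ℤ/2)⁵`. -/
def QOK (f : AddAut (discGroup gramS)) : Prop :=
  ∀ a : discGroup gramS, qF (eA (f a)) = qF (eA a)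

lemma preservesQ_iff (f : AddAut (discGroup gramS)) :
    PreservesQ gramS f ↔ QOK f := by
  constructor
  · intro h a
    obtain ⟨x, rfl⟩ := QuotientAddGroup.mk_surjective a
    obtain ⟨y, hy⟩ := QuotientAddGroup.mk_surjective (f (QuotientAddGroup.mk x))
    have hfd : f (discCls gramS x) = discCls gramS y := hy.symm
    have hd := h x y hfd
    obtain ⟨n, hn⟩ := exists_wit x
    obtain ⟨m, hm⟩ := exists_wit y
    rw [bfQ_val x n hn, bfQ_val y m hm, half_diff] at hd
    have e1 : eA (f (QuotientAddGroup.mk x)) = toV y := by rw [← hy]; rfl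
    have e2 : eA (QuotientAddGroup.mk x) = toV x := rfl
    rw [e1, e2, ← NQ_mod x n hn, ← NQ_mod y m hm]
    exact hd
  · intro h x y hfd
    obtain ⟨n, hn⟩ := exists_wit x
    obtain ⟨m, hm⟩ := exists_wit y
    rw [bfQ_val x n hn, bfQ_val y m hm, half_diff]
    rw [NQ_mod x n hn, NQ_mod y m hm]
    have := h (discCls gramS x)
    rw [hfd] at this
    exact this

lemma wit_mulVec (P : Matrix (Fin 5) (Fin 5) ℤ) (x : dualLattice gramS)
    (n : Fin 5 → ℤ) (hn : ∀ i, (n i : ℚ) = 2 * (x : Fin 5 → ℚ) i) :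
    ∀ i, ((∑ j, P i j * n j : ℤ) : ℚ) = 2 * (((P.map ((↑) : ℤ → ℚ)) *ᵥ (x : Fin 5 → ℚ)) i) := by
  intro i
  have hmv : ((P.map ((↑) : ℤ → ℚ)) *ᵥ (x : Fin 5 → ℚ)) i
      = ∑ j, (P i j : ℚ) * (x : Fin 5 → ℚ) j := by
    simp [Matrix.mulVec, dotProduct, Matrix.map_apply]
  rw [hmv, Finset.mul_sum]
  push_cast
  refine Finset.sum_congr rfl fun j _ => ?_
  rw [hn j]
  ring

lemma dual_mulVec (P : Matrix (Fin 5) (Fin 5) ℤ) (x : dualLattice gramS) :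
    (P.map ((↑) : ℤ → ℚ)) *ᵥ (x : Fin 5 → ℚ) ∈ dualLattice gramS := by
  obtain ⟨n, hn⟩ := exists_wit x
  rw [mem_dual]
  exact fun i => ⟨∑ j, P i j * n j, wit_mulVec P x n hn i⟩

lemma transport (P : Matrix (Fin 5) (Fin 5) ℤ) (x y : dualLattice gramS)
    (h : (y : Fin 5 → ℚ) = (P.map ((↑) : ℤ → ℚ)) *ᵥ (x : Fin 5 → ℚ)) :
    toV y = (P.map ((↑) : ℤ → ZMod 2)) *ᵥ toV x := by
  obtain ⟨n, hn⟩ := exists_wit x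
  have hy : ∀ i, ((∑ j, P i j * n j : ℤ) : ℚ) = 2 * (y : Fin 5 → ℚ) i := by
    intro i; rw [h]; exact wit_mulVec P x n hn i
  rw [toV_spec y _ hy, toV_spec x n hn]
  funext i
  have hmv : ((P.map ((↑) : ℤ → ZMod 2)) *ᵥ (fun j => ((n j : ℤ) : ZMod 2))) i
      = ∑ j, ((P i j : ℤ) : ZMod 2) * ((n j : ℤ) : ZMod 2) := by
    simp [Matrix.mulVec, dotProduct, Matrix.map_apply]
  rw [hmv]
  push_cast
  rfl

def autV (M N : Matrix (Fin 5) (Fin 5) (ZMod 2)) (h1 : M * N = 1) (h2 : N * M = 1) :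
    Vec ≃+ Vec where
  toFun v := M *ᵥ v
  invFun v := N *ᵥ v
  left_inv v := by show N *ᵥ (M *ᵥ v) = v; rw [Matrix.mulVec_mulVec, h2, Matrix.one_mulVec]
  right_inv v := by show M *ᵥ (N *ᵥ v) = v; rw [Matrix.mulVec_mulVec, h1, Matrix.one_mulVec]
  map_add' a b := Matrix.mulVec_add M a b

noncomputable def autD (M N : Matrix (Fin 5) (Fin 5) (ZMod 2)) (h1 : M * N = 1)
    (h2 : N * M = 1) : AddAut (discGroup gramS) :=
  (eA.trans (autV M N h1 h2)).trans eA.symm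

lemma eA_autD (M N : Matrix (Fin 5) (Fin 5) (ZMod 2)) (h1 : M * N = 1) (h2 : N * M = 1)
    (a : discGroup gramS) : eA (autD M N h1 h2 a) = M *ᵥ eA a := by
  show eA (eA.symm (autV M N h1 h2 (eA a))) = _
  rw [AddEquiv.apply_symm_apply]
  rfl

lemma inducedBy_autD (P : Matrix (Fin 5) (Fin 5) ℤ)
    (N : Matrix (Fin 5) (Fin 5) (ZMod 2)) (h1 : P.map ((↑) : ℤ → ZMod 2) * N = 1)
    (h2 : N * P.map ((↑) : ℤ → ZMod 2) = 1) :
    InducedBy gramS P (autD (P.map ((↑) : ℤ → ZMod 2)) N h1 h2) := by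
  intro x y h
  apply eA.injective
  rw [eA_autD, eA_mk, eA_mk, transport P x y h]

def T12 : Matrix (Fin 5) (Fin 5) ℤ :=
  !![1,0,0,0,0; 0,0,1,0,0; 0,1,0,0,0; 0,0,0,1,0; 0,0,0,0,1]
def T23 : Matrix (Fin 5) (Fin 5) ℤ :=
  !![1,0,0,0,0; 0,1,0,0,0; 0,0,0,1,0; 0,0,1,0,0; 0,0,0,0,1]
def T34 : Matrix (Fin 5) (Fin 5) ℤ :=
  !![1,0,0,0,0; 0,1,0,0,0; 0,0,1,0,0; 0,0,0,0,1; 0,0,0,1,0]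
def P₀inv : Matrix (Fin 5) (Fin 5) ℤ :=
  !![2,1,1,1,0; -1,-1,0,-1,0; 0,0,0,0,1; -1,0,-1,-1,0; -1,-1,-1,0,0]

def genP : Fin 4 → Matrix (Fin 5) (Fin 5) ℤ := ![T12, T23, T34, P₀]
def genPi : Fin 4 → Matrix (Fin 5) (Fin 5) ℤ := ![T12, T23, T34, P₀inv]

lemma genP_inv : ∀ k, genP k * genPi k = 1 ∧ genPi k * genP k = 1 := by decide

lemma genP_isomEq : ∀ k, (genP k)ᵀ * gramS * genP k = gramS := by decide

lemma genP_isom : ∀ k, IsIsometry gramS (genP k) := by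
  intro k
  refine ⟨IsUnit.of_mul_eq_one (genPi k).det ?_, genP_isomEq k⟩
  rw [← Matrix.det_mul, (genP_inv k).1, Matrix.det_one]

def genM (k : Fin 4) : Matrix (Fin 5) (Fin 5) (ZMod 2) := (genP k).map ((↑) : ℤ → ZMod 2)
def genMi (k : Fin 4) : Matrix (Fin 5) (Fin 5) (ZMod 2) := (genPi k).map ((↑) : ℤ → ZMod 2)

lemma genM_inv : ∀ k, genM k * genMi k = 1 ∧ genMi k * genM k = 1 := by decide

noncomputable def genA (k : Fin 4) : AddAut (discGroup gramS) :=
  autD (genM k) (genMi k) (genM_inv k).1 (genM_inv k).2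

lemma inducedBy_genA (k : Fin 4) : InducedBy gramS (genP k) (genA k) :=
  inducedBy_autD (genP k) (genMi k) (genM_inv k).1 (genM_inv k).2

lemma qF_P0 : ∀ v : Vec, qF (genM 3 *ᵥ v) = qF v := by decide
set_option maxHeartbeats 2000000 in
def tbl : List (Matrix (Fin 5) (Fin 5) (ZMod 2) × List (Fin 4)) := [
  (!![1, 0, 0, 0, 0; 0, 1, 0, 0, 0; 0, 0, 1, 0, 0; 0, 0, 0, 1, 0; 0, 0, 0, 0, 1], []),
  (!![1, 0, 0, 0, 0; 0, 0, 1, 0, 0; 0, 1, 0, 0, 0; 0, 0, 0, 1, 0; 0, 0, 0, 0, 1], [0]),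
  (!![1, 0, 0, 0, 0; 0, 1, 0, 0, 0; 0, 0, 0, 1, 0; 0, 0, 1, 0, 0; 0, 0, 0, 0, 1], [1]),
  (!![1, 0, 0, 0, 0; 0, 1, 0, 0, 0; 0, 0, 1, 0, 0; 0, 0, 0, 0, 1; 0, 0, 0, 1, 0], [2]),
  (!![0, 1, 0, 1, 1; 1, 1, 0, 0, 1; 1, 0, 0, 1, 1; 1, 1, 0, 1, 0; 0, 0, 1, 0, 0], [3]),
  (!![1, 0, 0, 0, 0; 0, 0, 1, 0, 0; 0, 0, 0, 1, 0; 0, 1, 0, 0, 0; 0, 0, 0, 0, 1], [1, 0]),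
  (!![1, 0, 0, 0, 0; 0, 0, 1, 0, 0; 0, 1, 0, 0, 0; 0, 0, 0, 0, 1; 0, 0, 0, 1, 0], [2, 0]),
  (!![0, 0, 1, 1, 1; 1, 0, 1, 0, 1; 1, 0, 0, 1, 1; 1, 0, 1, 1, 0; 0, 1, 0, 0, 0], [3, 0]),
  (!![1, 0, 0, 0, 0; 0, 0, 0, 1, 0; 0, 1, 0, 0, 0; 0, 0, 1, 0, 0; 0, 0, 0, 0, 1], [0, 1]),
  (!![1, 0, 0, 0, 0; 0, 1, 0, 0, 0; 0, 0, 0, 1, 0; 0, 0, 0, 0, 1; 0, 0, 1, 0, 0], [2, 1]),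
  (!![0, 1, 1, 0, 1; 1, 1, 0, 0, 1; 1, 0, 1, 0, 1; 1, 1, 1, 0, 0; 0, 0, 0, 1, 0], [3, 1]),
  (!![1, 0, 0, 0, 0; 0, 1, 0, 0, 0; 0, 0, 0, 0, 1; 0, 0, 1, 0, 0; 0, 0, 0, 1, 0], [1, 2]),
  (!![0, 1, 0, 1, 1; 1, 1, 0, 1, 0; 1, 0, 0, 1, 1; 1, 1, 0, 0, 1; 0, 0, 1, 0, 0], [3, 2]),
  (!![0, 1, 0, 1, 1; 1, 0, 0, 1, 1; 1, 1, 0, 0, 1; 1, 1, 0, 1, 0; 0, 0, 1, 0, 0], [0, 3]),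
  (!![0, 1, 0, 1, 1; 1, 1, 0, 0, 1; 1, 1, 0, 1, 0; 1, 0, 0, 1, 1; 0, 0, 1, 0, 0], [1, 3]),
  (!![0, 1, 0, 1, 1; 1, 1, 0, 0, 1; 1, 0, 0, 1, 1; 0, 0, 1, 0, 0; 1, 1, 0, 1, 0], [2, 3]),
  (!![0, 0, 1, 1, 1; 1, 0, 1, 1, 0; 1, 0, 1, 0, 1; 0, 1, 0, 0, 0; 1, 0, 0, 1, 1], [3, 3]),
  (!![1, 0, 0, 0, 0; 0, 0, 0, 1, 0; 0, 0, 1, 0, 0; 0, 1, 0, 0, 0; 0, 0, 0, 0, 1], [0, 1, 0]),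
  (!![1, 0, 0, 0, 0; 0, 0, 1, 0, 0; 0, 0, 0, 1, 0; 0, 0, 0, 0, 1; 0, 1, 0, 0, 0], [2, 1, 0]),
  (!![0, 1, 1, 0, 1; 1, 0, 1, 0, 1; 1, 1, 0, 0, 1; 1, 1, 1, 0, 0; 0, 0, 0, 1, 0], [3, 1, 0]),
  (!![1, 0, 0, 0, 0; 0, 0, 1, 0, 0; 0, 0, 0, 0, 1; 0, 1, 0, 0, 0; 0, 0, 0, 1, 0], [1, 2, 0]),
  (!![0, 0, 1, 1, 1; 1, 0, 1, 1, 0; 1, 0, 0, 1, 1; 1, 0, 1, 0, 1; 0, 1, 0, 0, 0], [3, 2, 0]),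
  (!![0, 0, 1, 1, 1; 1, 0, 0, 1, 1; 1, 0, 1, 0, 1; 1, 0, 1, 1, 0; 0, 1, 0, 0, 0], [0, 3, 0]),
  (!![0, 0, 1, 1, 1; 1, 0, 1, 0, 1; 1, 0, 1, 1, 0; 1, 0, 0, 1, 1; 0, 1, 0, 0, 0], [1, 3, 0]),
  (!![0, 0, 1, 1, 1; 1, 0, 1, 0, 1; 1, 0, 0, 1, 1; 0, 1, 0, 0, 0; 1, 0, 1, 1, 0], [2, 3, 0]),
  (!![0, 1, 0, 1, 1; 1, 1, 0, 1, 0; 1, 1, 0, 0, 1; 0, 0, 1, 0, 0; 1, 0, 0, 1, 1], [3, 3, 0]),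
  (!![1, 0, 0, 0, 0; 0, 0, 0, 1, 0; 0, 1, 0, 0, 0; 0, 0, 0, 0, 1; 0, 0, 1, 0, 0], [2, 0, 1]),
  (!![1, 0, 0, 0, 0; 0, 1, 0, 0, 0; 0, 0, 0, 0, 1; 0, 0, 0, 1, 0; 0, 0, 1, 0, 0], [1, 2, 1]),
  (!![0, 1, 1, 0, 1; 1, 1, 1, 0, 0; 1, 0, 1, 0, 1; 1, 1, 0, 0, 1; 0, 0, 0, 1, 0], [3, 2, 1]),
  (!![0, 1, 1, 0, 1; 1, 1, 0, 0, 1; 1, 1, 1, 0, 0; 1, 0, 1, 0, 1; 0, 0, 0, 1, 0], [1, 3, 1]),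
  (!![0, 1, 1, 0, 1; 1, 1, 0, 0, 1; 1, 0, 1, 0, 1; 0, 0, 0, 1, 0; 1, 1, 1, 0, 0], [2, 3, 1]),
  (!![0, 0, 1, 1, 1; 1, 0, 1, 1, 0; 1, 0, 0, 1, 1; 0, 1, 0, 0, 0; 1, 0, 1, 0, 1], [3, 3, 1]),
  (!![1, 0, 0, 0, 0; 0, 0, 0, 0, 1; 0, 1, 0, 0, 0; 0, 0, 1, 0, 0; 0, 0, 0, 1, 0], [0, 1, 2]),
  (!![0, 1, 1, 1, 0; 1, 1, 0, 1, 0; 1, 0, 1, 1, 0; 1, 1, 1, 0, 0; 0, 0, 0, 0, 1], [3, 1, 2]),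
  (!![0, 1, 0, 1, 1; 1, 0, 0, 1, 1; 1, 1, 0, 1, 0; 1, 1, 0, 0, 1; 0, 0, 1, 0, 0], [0, 3, 2]),
  (!![0, 1, 0, 1, 1; 1, 1, 0, 1, 0; 1, 1, 0, 0, 1; 1, 0, 0, 1, 1; 0, 0, 1, 0, 0], [1, 3, 2]),
  (!![0, 1, 0, 1, 1; 1, 1, 0, 1, 0; 1, 0, 0, 1, 1; 0, 0, 1, 0, 0; 1, 1, 0, 0, 1], [2, 3, 2]),
  (!![0, 0, 1, 1, 1; 1, 0, 1, 0, 1; 1, 0, 1, 1, 0; 0, 1, 0, 0, 0; 1, 0, 0, 1, 1], [3, 3, 2]),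
  (!![0, 1, 0, 1, 1; 1, 0, 0, 1, 1; 1, 1, 0, 0, 1; 0, 0, 1, 0, 0; 1, 1, 0, 1, 0], [2, 0, 3]),
  (!![0, 1, 1, 0, 1; 1, 1, 1, 0, 0; 1, 0, 1, 0, 1; 0, 0, 0, 1, 0; 1, 1, 0, 0, 1], [3, 0, 3]),
  (!![0, 1, 0, 1, 1; 1, 1, 0, 0, 1; 1, 1, 0, 1, 0; 0, 0, 1, 0, 0; 1, 0, 0, 1, 1], [2, 1, 3]),
  (!![0, 1, 1, 1, 0; 1, 0, 1, 1, 0; 1, 1, 1, 0, 0; 0, 0, 0, 0, 1; 1, 1, 0, 1, 0], [3, 1, 3]),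
  (!![0, 1, 0, 1, 1; 1, 1, 0, 0, 1; 0, 0, 1, 0, 0; 1, 0, 0, 1, 1; 1, 1, 0, 1, 0], [1, 2, 3]),
  (!![0, 0, 1, 1, 1; 0, 1, 0, 0, 0; 1, 0, 1, 0, 1; 1, 0, 1, 1, 0; 1, 0, 0, 1, 1], [3, 2, 3]),
  (!![0, 0, 1, 1, 1; 1, 0, 1, 1, 0; 0, 1, 0, 0, 0; 1, 0, 1, 0, 1; 1, 0, 0, 1, 1], [1, 3, 3]),
  (!![0, 0, 1, 1, 1; 1, 0, 1, 1, 0; 1, 0, 1, 0, 1; 1, 0, 0, 1, 1; 0, 1, 0, 0, 0], [2, 3, 3]),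
  (!![0, 1, 1, 0, 1; 0, 0, 0, 1, 0; 1, 1, 1, 0, 0; 1, 1, 0, 0, 1; 1, 0, 1, 0, 1], [3, 3, 3]),
  (!![1, 0, 0, 0, 0; 0, 0, 0, 1, 0; 0, 0, 1, 0, 0; 0, 0, 0, 0, 1; 0, 1, 0, 0, 0], [2, 0, 1, 0]),
  (!![1, 0, 0, 0, 0; 0, 0, 1, 0, 0; 0, 0, 0, 0, 1; 0, 0, 0, 1, 0; 0, 1, 0, 0, 0], [1, 2, 1, 0]),
  (!![0, 1, 1, 0, 1; 1, 1, 1, 0, 0; 1, 1, 0, 0, 1; 1, 0, 1, 0, 1; 0, 0, 0, 1, 0], [3, 2, 1, 0]),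
  (!![0, 1, 1, 0, 1; 1, 0, 1, 0, 1; 1, 1, 1, 0, 0; 1, 1, 0, 0, 1; 0, 0, 0, 1, 0], [1, 3, 1, 0]),
  (!![0, 1, 1, 0, 1; 1, 0, 1, 0, 1; 1, 1, 0, 0, 1; 0, 0, 0, 1, 0; 1, 1, 1, 0, 0], [2, 3, 1, 0]),
  (!![1, 0, 0, 0, 0; 0, 0, 0, 0, 1; 0, 0, 1, 0, 0; 0, 1, 0, 0, 0; 0, 0, 0, 1, 0], [0, 1, 2, 0]),
  (!![0, 1, 1, 1, 0; 1, 0, 1, 1, 0; 1, 1, 0, 1, 0; 1, 1, 1, 0, 0; 0, 0, 0, 0, 1], [3, 1, 2, 0]),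
  (!![0, 0, 1, 1, 1; 1, 0, 0, 1, 1; 1, 0, 1, 1, 0; 1, 0, 1, 0, 1; 0, 1, 0, 0, 0], [0, 3, 2, 0]),
  (!![0, 0, 1, 1, 1; 1, 0, 0, 1, 1; 1, 0, 1, 0, 1; 0, 1, 0, 0, 0; 1, 0, 1, 1, 0], [2, 0, 3, 0]),
  (!![0, 1, 1, 0, 1; 1, 1, 1, 0, 0; 1, 1, 0, 0, 1; 0, 0, 0, 1, 0; 1, 0, 1, 0, 1], [3, 0, 3, 0]),
  (!![0, 1, 1, 1, 0; 1, 1, 0, 1, 0; 1, 1, 1, 0, 0; 0, 0, 0, 0, 1; 1, 0, 1, 1, 0], [3, 1, 3, 0]),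
  (!![0, 0, 1, 1, 1; 1, 0, 1, 0, 1; 0, 1, 0, 0, 0; 1, 0, 0, 1, 1; 1, 0, 1, 1, 0], [1, 2, 3, 0]),
  (!![0, 1, 0, 1, 1; 0, 0, 1, 0, 0; 1, 1, 0, 0, 1; 1, 1, 0, 1, 0; 1, 0, 0, 1, 1], [3, 2, 3, 0]),
  (!![0, 1, 0, 1, 1; 1, 1, 0, 1, 0; 0, 0, 1, 0, 0; 1, 1, 0, 0, 1; 1, 0, 0, 1, 1], [1, 3, 3, 0]),
  (!![0, 1, 1, 0, 1; 0, 0, 0, 1, 0; 1, 1, 1, 0, 0; 1, 0, 1, 0, 1; 1, 1, 0, 0, 1], [3, 3, 3, 0]),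
  (!![1, 0, 0, 0, 0; 0, 0, 0, 1, 0; 0, 0, 0, 0, 1; 0, 1, 0, 0, 0; 0, 0, 1, 0, 0], [1, 2, 0, 1]),
  (!![1, 0, 0, 0, 0; 0, 0, 0, 0, 1; 0, 1, 0, 0, 0; 0, 0, 0, 1, 0; 0, 0, 1, 0, 0], [0, 1, 2, 1]),
  (!![0, 1, 1, 1, 0; 1, 1, 1, 0, 0; 1, 0, 1, 1, 0; 1, 1, 0, 1, 0; 0, 0, 0, 0, 1], [3, 1, 2, 1]),
  (!![0, 0, 1, 1, 1; 1, 0, 0, 1, 1; 1, 0, 1, 1, 0; 0, 1, 0, 0, 0; 1, 0, 1, 0, 1], [3, 3, 2, 1]),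
  (!![0, 1, 1, 0, 1; 1, 1, 0, 0, 1; 1, 1, 1, 0, 0; 0, 0, 0, 1, 0; 1, 0, 1, 0, 1], [2, 1, 3, 1]),
  (!![0, 1, 1, 1, 0; 1, 0, 1, 1, 0; 1, 1, 0, 1, 0; 0, 0, 0, 0, 1; 1, 1, 1, 0, 0], [3, 1, 3, 1]),
  (!![0, 1, 1, 0, 1; 1, 1, 0, 0, 1; 0, 0, 0, 1, 0; 1, 0, 1, 0, 1; 1, 1, 1, 0, 0], [1, 2, 3, 1]),
  (!![0, 0, 1, 1, 1; 0, 1, 0, 0, 0; 1, 0, 0, 1, 1; 1, 0, 1, 1, 0; 1, 0, 1, 0, 1], [3, 2, 3, 1]),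
  (!![0, 0, 1, 1, 1; 1, 0, 1, 1, 0; 0, 1, 0, 0, 0; 1, 0, 0, 1, 1; 1, 0, 1, 0, 1], [1, 3, 3, 1]),
  (!![0, 1, 0, 1, 1; 0, 0, 1, 0, 0; 1, 1, 0, 1, 0; 1, 1, 0, 0, 1; 1, 0, 0, 1, 1], [3, 3, 3, 1]),
  (!![0, 1, 1, 1, 0; 1, 1, 0, 1, 0; 1, 1, 1, 0, 0; 1, 0, 1, 1, 0; 0, 0, 0, 0, 1], [1, 3, 1, 2]),
  (!![0, 1, 1, 1, 0; 1, 1, 0, 1, 0; 1, 0, 1, 1, 0; 0, 0, 0, 0, 1; 1, 1, 1, 0, 0], [2, 3, 1, 2]),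
  (!![0, 1, 0, 1, 1; 1, 0, 0, 1, 1; 1, 1, 0, 1, 0; 0, 0, 1, 0, 0; 1, 1, 0, 0, 1], [2, 0, 3, 2]),
  (!![0, 1, 1, 1, 0; 1, 1, 1, 0, 0; 1, 0, 1, 1, 0; 0, 0, 0, 0, 1; 1, 1, 0, 1, 0], [3, 0, 3, 2]),
  (!![0, 1, 1, 0, 1; 1, 0, 1, 0, 1; 1, 1, 1, 0, 0; 0, 0, 0, 1, 0; 1, 1, 0, 0, 1], [3, 1, 3, 2]),
  (!![0, 1, 0, 1, 1; 1, 1, 0, 1, 0; 0, 0, 1, 0, 0; 1, 0, 0, 1, 1; 1, 1, 0, 0, 1], [1, 2, 3, 2]),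
  (!![0, 0, 1, 1, 1; 0, 1, 0, 0, 0; 1, 0, 1, 1, 0; 1, 0, 1, 0, 1; 1, 0, 0, 1, 1], [3, 2, 3, 2]),
  (!![0, 0, 1, 1, 1; 1, 0, 1, 0, 1; 0, 1, 0, 0, 0; 1, 0, 1, 1, 0; 1, 0, 0, 1, 1], [1, 3, 3, 2]),
  (!![0, 1, 1, 1, 0; 0, 0, 0, 0, 1; 1, 1, 1, 0, 0; 1, 1, 0, 1, 0; 1, 0, 1, 1, 0], [3, 3, 3, 2]),
  (!![0, 1, 0, 1, 1; 1, 0, 0, 1, 1; 0, 0, 1, 0, 0; 1, 1, 0, 0, 1; 1, 1, 0, 1, 0], [1, 2, 0, 3]),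
  (!![0, 1, 1, 0, 1; 0, 0, 0, 1, 0; 1, 0, 1, 0, 1; 1, 1, 1, 0, 0; 1, 1, 0, 0, 1], [3, 2, 0, 3]),
  (!![0, 1, 1, 0, 1; 1, 1, 1, 0, 0; 0, 0, 0, 1, 0; 1, 0, 1, 0, 1; 1, 1, 0, 0, 1], [1, 3, 0, 3]),
  (!![0, 0, 1, 1, 1; 0, 1, 0, 0, 0; 1, 0, 1, 1, 0; 1, 0, 0, 1, 1; 1, 0, 1, 0, 1], [3, 3, 0, 3]),
  (!![0, 1, 0, 1, 1; 1, 1, 0, 0, 1; 0, 0, 1, 0, 0; 1, 1, 0, 1, 0; 1, 0, 0, 1, 1], [1, 2, 1, 3]),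
  (!![0, 1, 1, 1, 0; 0, 0, 0, 0, 1; 1, 1, 1, 0, 0; 1, 0, 1, 1, 0; 1, 1, 0, 1, 0], [3, 2, 1, 3]),
  (!![0, 1, 1, 1, 0; 1, 0, 1, 1, 0; 0, 0, 0, 0, 1; 1, 1, 1, 0, 0; 1, 1, 0, 1, 0], [1, 3, 1, 3]),
  (!![0, 1, 1, 1, 0; 1, 0, 1, 1, 0; 1, 1, 1, 0, 0; 1, 1, 0, 1, 0; 0, 0, 0, 0, 1], [2, 3, 1, 3]),
  (!![0, 1, 1, 0, 1; 0, 0, 0, 1, 0; 1, 0, 1, 0, 1; 1, 1, 0, 0, 1; 1, 1, 1, 0, 0], [3, 3, 1, 3]),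
  (!![0, 1, 0, 1, 1; 0, 0, 1, 0, 0; 1, 1, 0, 0, 1; 1, 0, 0, 1, 1; 1, 1, 0, 1, 0], [0, 1, 2, 3]),
  (!![0, 0, 1, 1, 1; 0, 1, 0, 0, 0; 1, 0, 1, 0, 1; 1, 0, 0, 1, 1; 1, 0, 1, 1, 0], [2, 3, 2, 3]),
  (!![0, 1, 1, 0, 1; 1, 1, 1, 0, 0; 0, 0, 0, 1, 0; 1, 1, 0, 0, 1; 1, 0, 1, 0, 1], [3, 3, 2, 3]),
  (!![1, 0, 0, 0, 0; 0, 0, 0, 1, 0; 0, 0, 0, 0, 1; 0, 0, 1, 0, 0; 0, 1, 0, 0, 0], [3, 1, 3, 3]),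
  (!![0, 1, 1, 0, 1; 0, 0, 0, 1, 0; 1, 1, 0, 0, 1; 1, 1, 1, 0, 0; 1, 0, 1, 0, 1], [1, 3, 3, 3]),
  (!![0, 1, 1, 1, 0; 1, 1, 0, 1, 0; 0, 0, 0, 0, 1; 1, 0, 1, 1, 0; 1, 1, 1, 0, 0], [3, 3, 3, 3]),
  (!![1, 0, 0, 0, 0; 0, 0, 0, 0, 1; 0, 0, 1, 0, 0; 0, 0, 0, 1, 0; 0, 1, 0, 0, 0], [0, 1, 2, 1, 0]),
  (!![0, 1, 1, 1, 0; 1, 1, 1, 0, 0; 1, 1, 0, 1, 0; 1, 0, 1, 1, 0; 0, 0, 0, 0, 1], [3, 1, 2, 1, 0]),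
  (!![0, 1, 1, 0, 1; 1, 0, 1, 0, 1; 0, 0, 0, 1, 0; 1, 1, 0, 0, 1; 1, 1, 1, 0, 0], [1, 2, 3, 1, 0]),
  (!![0, 1, 0, 1, 1; 0, 0, 1, 0, 0; 1, 0, 0, 1, 1; 1, 1, 0, 1, 0; 1, 1, 0, 0, 1], [3, 2, 3, 1, 0]),
  (!![0, 1, 1, 1, 0; 1, 1, 1, 0, 0; 1, 1, 0, 1, 0; 0, 0, 0, 0, 1; 1, 0, 1, 1, 0], [3, 0, 3, 2, 0]),
  (!![0, 0, 1, 1, 1; 1, 0, 0, 1, 1; 0, 1, 0, 0, 0; 1, 0, 1, 0, 1; 1, 0, 1, 1, 0], [1, 2, 0, 3, 0]),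
  (!![0, 1, 0, 1, 1; 0, 0, 1, 0, 0; 1, 1, 0, 1, 0; 1, 0, 0, 1, 1; 1, 1, 0, 0, 1], [3, 3, 0, 3, 0]),
  (!![0, 1, 1, 1, 0; 1, 1, 0, 1, 0; 0, 0, 0, 0, 1; 1, 1, 1, 0, 0; 1, 0, 1, 1, 0], [1, 3, 1, 3, 0]),
  (!![0, 1, 1, 0, 1; 0, 0, 0, 1, 0; 1, 1, 0, 0, 1; 1, 0, 1, 0, 1; 1, 1, 1, 0, 0], [3, 3, 1, 3, 0]),
  (!![0, 1, 1, 1, 0; 1, 0, 1, 1, 0; 0, 0, 0, 0, 1; 1, 1, 0, 1, 0; 1, 1, 1, 0, 0], [3, 3, 3, 3, 0]),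
  (!![1, 0, 0, 0, 0; 0, 0, 0, 0, 1; 0, 0, 0, 1, 0; 0, 1, 0, 0, 0; 0, 0, 1, 0, 0], [0, 1, 2, 0, 1]),
  (!![0, 0, 1, 1, 1; 1, 0, 0, 1, 1; 0, 1, 0, 0, 0; 1, 0, 1, 1, 0; 1, 0, 1, 0, 1], [1, 3, 3, 2, 1]),
  (!![0, 1, 1, 1, 0; 0, 0, 0, 0, 1; 1, 1, 0, 1, 0; 1, 1, 1, 0, 0; 1, 0, 1, 1, 0], [3, 3, 3, 2, 1]),
  (!![0, 1, 1, 0, 1; 1, 1, 0, 0, 1; 0, 0, 0, 1, 0; 1, 1, 1, 0, 0; 1, 0, 1, 0, 1], [1, 2, 1, 3, 1]),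
  (!![0, 1, 1, 1, 0; 0, 0, 0, 0, 1; 1, 1, 0, 1, 0; 1, 0, 1, 1, 0; 1, 1, 1, 0, 0], [3, 2, 1, 3, 1]),
  (!![0, 1, 0, 1, 1; 0, 0, 1, 0, 0; 1, 0, 0, 1, 1; 1, 1, 0, 0, 1; 1, 1, 0, 1, 0], [3, 3, 1, 3, 1]),
  (!![0, 0, 1, 1, 1; 0, 1, 0, 0, 0; 1, 0, 0, 1, 1; 1, 0, 1, 0, 1; 1, 0, 1, 1, 0], [2, 3, 2, 3, 1]),
  (!![0, 1, 1, 1, 0; 1, 1, 1, 0, 0; 0, 0, 0, 0, 1; 1, 0, 1, 1, 0; 1, 1, 0, 1, 0], [3, 3, 3, 3, 1]),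
  (!![0, 1, 0, 1, 1; 1, 0, 0, 1, 1; 0, 0, 1, 0, 0; 1, 1, 0, 1, 0; 1, 1, 0, 0, 1], [1, 2, 0, 3, 2]),
  (!![0, 1, 1, 1, 0; 0, 0, 0, 0, 1; 1, 0, 1, 1, 0; 1, 1, 1, 0, 0; 1, 1, 0, 1, 0], [3, 2, 0, 3, 2]),
  (!![0, 1, 1, 0, 1; 1, 0, 1, 0, 1; 0, 0, 0, 1, 0; 1, 1, 1, 0, 0; 1, 1, 0, 0, 1], [1, 3, 1, 3, 2]),
  (!![0, 1, 1, 1, 0; 0, 0, 0, 0, 1; 1, 0, 1, 1, 0; 1, 1, 0, 1, 0; 1, 1, 1, 0, 0], [3, 3, 1, 3, 2]),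
  (!![0, 1, 1, 1, 0; 1, 1, 1, 0, 0; 0, 0, 0, 0, 1; 1, 1, 0, 1, 0; 1, 0, 1, 1, 0], [3, 3, 2, 3, 2]),
  (!![1, 0, 0, 0, 0; 0, 0, 0, 0, 1; 0, 0, 0, 1, 0; 0, 0, 1, 0, 0; 0, 1, 0, 0, 0], [3, 1, 3, 3, 2])]

def set0L : List Vec := [![1, 0, 0, 0, 0], ![0, 1, 1, 1, 0], ![0, 1, 1, 0, 1], ![0, 1, 0, 1, 1], ![0, 0, 1, 1, 1], ![1, 1, 1, 1, 1]]
def set1L : List Vec := [![0, 1, 0, 0, 0], ![0, 0, 1, 0, 0], ![1, 1, 1, 0, 0], ![0, 0, 0, 1, 0], ![1, 1, 0, 1, 0], ![1, 0, 1, 1, 0], ![0, 0, 0, 0, 1], ![1, 1, 0, 0, 1], ![1, 0, 1, 0, 1], ![1, 0, 0, 1, 1]]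

lemma memS0 : ∀ c : Vec, qF c = 1 → c ∈ set0L := by decide
lemma memS1 : ∀ c : Vec, qF c = 3 → c ∈ set1L := by decide

def colMat (c0 c1 c2 c3 c4 : Vec) : Matrix (Fin 5) (Fin 5) (ZMod 2) :=
  Matrix.of fun i j => ![c0,c1,c2,c3,c4] j i

set_option maxRecDepth 40000 in
set_option maxHeartbeats 4000000 in
lemma tblA : ∀ p ∈ tbl, p.1 = ((p.2.map genM).prod) := by decide


set_option maxRecDepth 40000 in
set_option maxHeartbeats 4000000 in
lemma boolB : (set0L.all fun c0 => (set1L.all fun c1 => (!decide (qF (c0 + c1) = 0) || (set1L.all fun c2 => (!decide (qF (c0 + c2) = 0) || (!decide (qF (c1 + c2) = 2) || (set1L.all fun c3 => (!decide (qF (c0 + c3) = 0) || (!decide (qF (c1 + c3) = 2) || (!decide (qF (c2 + c3) = 2) || (set1L.all fun c4 => (!decide (qF (c0 + c4) = 0) || (!decide (qF (c1 + c4) = 2) || (!decide (qF (c2 + c4) = 2) || (!decide (qF (c3 + c4) = 2) || decide (colMat c0 c1 c2 c3 c4 ∈ tbl.map Prod.fst)))))))))))))))) = true := by decide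

set_option maxRecDepth 40000 in
lemma bigB : ∀ c0 ∈ set0L, ∀ c1 ∈ set1L, qF (c0 + c1) = 0 →
    ∀ c2 ∈ set1L, qF (c0 + c2) = 0 → qF (c1 + c2) = 2 →
    ∀ c3 ∈ set1L, qF (c0 + c3) = 0 → qF (c1 + c3) = 2 → qF (c2 + c3) = 2 →
    ∀ c4 ∈ set1L, qF (c0 + c4) = 0 → qF (c1 + c4) = 2 → qF (c2 + c4) = 2 → qF (c3 + c4) = 2 →
    colMat c0 c1 c2 c3 c4 ∈ tbl.map Prod.fst := by
  have h := boolB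
  simp only [List.all_eq_true, Bool.or_eq_true, Bool.not_eq_true', decide_eq_false_iff_not,
    decide_eq_true_eq, ← imp_iff_not_or] at h
  exact h

lemma smul_hom (g : Vec →+ Vec) (c : ZMod 2) (x : Vec) : g (c • x) = c • g x := by
  fin_cases c
  · show g ((0 : ZMod 2) • x) = (0 : ZMod 2) • g x
    rw [zero_smul, zero_smul, map_zero]
  · show g ((1 : ZMod 2) • x) = (1 : ZMod 2) • g x
    rw [one_smul, one_smul]

def matOf (g : Vec →+ Vec) : Matrix (Fin 5) (Fin 5) (ZMod 2) :=
  Matrix.of fun i j => g (Pi.single j 1) i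

lemma matOf_mulVec (g : Vec →+ Vec) (v : Vec) : g v = matOf g *ᵥ v := by
  have hv : v = ∑ j, Pi.single j (v j) := by
    funext j
    rw [Finset.sum_apply]
    rw [Finset.sum_pi_single]
    simp
  calc g v = g (∑ j, Pi.single j (v j)) := by rw [← hv]
    _ = ∑ j, g (Pi.single j (v j)) := map_sum g _ _
    _ = ∑ j, v j • g (Pi.single j 1) := by
        refine Finset.sum_congr rfl fun j _ => ?_
        rw [← smul_hom g (v j)]
        congr 1
        funext i
        rcases eq_or_ne i j with rfl | hij
        · simp
        · simp [Pi.single_eq_of_ne hij]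
    _ = matOf g *ᵥ v := by
        funext i
        rw [Finset.sum_apply]
        show _ = ∑ j, matOf g i j * v j
        refine Finset.sum_congr rfl fun j _ => ?_
        rw [Pi.smul_apply, smul_eq_mul, mul_comm]
        rfl

/-- The additive endomorphism of `(ℤ/2)⁵` attached to an automorphism of the
discriminant group. -/
noncomputable def vecHom (f : AddAut (discGroup gramS)) : Vec →+ Vec where
  toFun v := eA (f (eA.symm v))
  map_zero' := by simp
  map_add' a b := by simp

lemma eA_f (f : AddAut (discGroup gramS)) (a : discGroup gramS) :
    eA (f a) = matOf (vecHom f) *ᵥ eA a := by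
  rw [← matOf_mulVec (vecHom f) (eA a)]
  show eA (f a) = eA (f (eA.symm (eA a)))
  rw [AddEquiv.symm_apply_apply]

lemma eA_genA (k : Fin 4) (a : discGroup gramS) : eA (genA k a) = genM k *ᵥ eA a :=
  eA_autD (genM k) (genMi k) (genM_inv k).1 (genM_inv k).2 a

lemma eA_wordAut (w : List (Fin 4)) (a : discGroup gramS) :
    eA (((w.map genA).sum) a) = ((w.map genM).prod) *ᵥ eA a := by
  induction w generalizing a with
  | nil =>
    rw [List.map_nil, List.map_nil, List.sum_nil, List.prod_nil, Matrix.one_mulVec]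
    rfl
  | cons k t ih =>
    rw [List.map_cons, List.map_cons, List.sum_cons, List.prod_cons]
    rw [show ((genA k + (t.map genA).sum) a) = genA k (((t.map genA).sum) a) from rfl]
    rw [eA_genA, ih, Matrix.mulVec_mulVec]
lemma exists_word (f : AddAut (discGroup gramS)) (h : QOK f) :
    ∃ w : List (Fin 4), f = (w.map genA).sum := by
  set M := matOf (vecHom f) with hMdef
  have hQ4 : ∀ v : Vec, qF (M *ᵥ v) = qF v := by
    intro v
    have hv := h (eA.symm v)
    rw [eA_f, AddEquiv.apply_symm_apply] at hv
    exact hv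
  set c : Fin 5 → Vec := fun j => M *ᵥ Pi.single j 1 with hc
  have hp : ∀ i j : Fin 5, qF (c i + c j) = qF ((Pi.single i 1 : Vec) + Pi.single j 1) := by
    intro i j
    rw [hc]
    show qF (M *ᵥ Pi.single i 1 + M *ᵥ Pi.single j 1) = _
    rw [← Matrix.mulVec_add]
    exact hQ4 _
  have h0 : qF (c 0) = 1 := (hQ4 (Pi.single 0 1)).trans (by decide)
  have h1 : qF (c 1) = 3 := (hQ4 (Pi.single 1 1)).trans (by decide)
  have h2 : qF (c 2) = 3 := (hQ4 (Pi.single 2 1)).trans (by decide)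
  have h3 : qF (c 3) = 3 := (hQ4 (Pi.single 3 1)).trans (by decide)
  have h4 : qF (c 4) = 3 := (hQ4 (Pi.single 4 1)).trans (by decide)
  have hmem := bigB (c 0) (memS0 _ h0) (c 1) (memS1 _ h1)
    ((hp 0 1).trans (by decide))
    (c 2) (memS1 _ h2) ((hp 0 2).trans (by decide)) ((hp 1 2).trans (by decide))
    (c 3) (memS1 _ h3) ((hp 0 3).trans (by decide)) ((hp 1 3).trans (by decide))
    ((hp 2 3).trans (by decide))
    (c 4) (memS1 _ h4) ((hp 0 4).trans (by decide)) ((hp 1 4).trans (by decide))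
    ((hp 2 4).trans (by decide)) ((hp 3 4).trans (by decide))
  have hcj : ∀ j, c j = fun i => M i j := by
    intro j
    rw [hc]
    show M *ᵥ Pi.single j 1 = _
    rw [Matrix.mulVec_single]
    funext i
    simp
  have hcol : colMat (c 0) (c 1) (c 2) (c 3) (c 4) = M := by
    ext i j
    show (![c 0, c 1, c 2, c 3, c 4] j) i = M i j
    fin_cases j <;> simp [hcj]
  rw [hcol] at hmem
  obtain ⟨p, hp_mem, hpeq⟩ := List.mem_map.mp hmem
  have htbl := tblA p hp_mem
  refine ⟨p.2, AddEquiv.ext fun a => eA.injective ?_⟩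
  rw [eA_f, eA_wordAut, ← htbl, hpeq]

lemma genP3 : genP 3 = P₀ := by
  show (![T12, T23, T34, P₀] : Fin 4 → Matrix (Fin 5) (Fin 5) ℤ) 3 = P₀
  rfl

lemma genM3 : genM 3 = P₀.map ((↑) : ℤ → ZMod 2) := by rw [genM, genP3]

def sigmaOf : Fin 3 → Equiv.Perm (Fin 5) := ![Equiv.swap 1 2, Equiv.swap 2 3, Equiv.swap 3 4]

lemma permVec : ∀ (k : Fin 3) (x : Fin 5 → ℚ),
    ((genP ⟨k, by omega⟩).map ((↑) : ℤ → ℚ)) *ᵥ x = fun i => x (sigmaOf k i) := by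
  intro k x
  funext i
  fin_cases k <;> fin_cases i <;>
    simp [genP, T12, T23, T34, sigmaOf, Matrix.mulVec, dotProduct,
      Matrix.map_apply, Fin.sum_univ_five, Equiv.swap_apply_def]

lemma genA_mem : ∀ k : Fin 4, genA k ∈ genSet := by
  intro k
  by_cases hk : k = 3
  · right
    subst hk
    show InducedBy gramS P₀ (genA 3)
    have := inducedBy_genA 3
    rwa [genP3] at this
  · left
    have hk3 : (k : ℕ) < 3 := by omega
    refine ⟨sigmaOf ⟨k, hk3⟩, ?_, ?_⟩
    · fin_cases k <;> first | rfl | (exfalso; exact hk rfl)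
    · intro x y hxy
      refine inducedBy_genA k x y ?_
      rw [hxy]
      have := permVec ⟨k, hk3⟩ (x : Fin 5 → ℚ)
      have hkk : (⟨(k : ℕ), by omega⟩ : Fin 4) = k := by
        apply Fin.ext
        rfl
      rw [hkk] at this
      rw [this]

lemma qF_perm (σ : Equiv.Perm (Fin 5)) (h : σ 0 = 0) (v : Vec) :
    qF (fun i => v (σ i)) = qF v := by
  show 2 * c2 (v (σ 0)) - ∑ i, c2 (v (σ i)) = 2 * c2 (v 0) - ∑ i, c2 (v i)
  rw [h, Equiv.sum_comp σ (fun i => c2 (v i))]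

lemma genSet_QOK : ∀ g ∈ genSet, QOK g := by
  rintro g (⟨σ, h0, hg⟩ | hg) <;> intro a <;>
    obtain ⟨x, rfl⟩ := QuotientAddGroup.mk_surjective a
  · obtain ⟨n, hn⟩ := exists_wit x
    have hy : (fun i => (x : Fin 5 → ℚ) (σ i)) ∈ dualLattice gramS :=
      (mem_dual _).mpr fun i => ⟨n (σ i), hn (σ i)⟩
    have hga := hg x ⟨_, hy⟩ rfl
    rw [show (QuotientAddGroup.mk x : discGroup gramS) = discCls gramS x from rfl, hga,
      eA_mk, eA_mk]
    rw [toV_spec ⟨_, hy⟩ (fun i => n (σ i)) (fun i => hn (σ i)), toV_spec x n hn]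
    exact qF_perm σ h0 (fun i => ((n i : ℤ) : ZMod 2))
  · have hy : (P₀.map ((↑) : ℤ → ℚ)) *ᵥ (x : Fin 5 → ℚ) ∈ dualLattice gramS :=
      dual_mulVec P₀ x
    have hga := hg x ⟨_, hy⟩ rfl
    rw [show (QuotientAddGroup.mk x : discGroup gramS) = discCls gramS x from rfl, hga,
      eA_mk, eA_mk]
    rw [transport P₀ x ⟨_, hy⟩ rfl, ← genM3]
    exact qF_P0 (toV x)

lemma closure_QOK (f : AddAut (discGroup gramS)) (hf : f ∈ AddSubgroup.closure genSet) :
    QOK f := by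
  refine AddSubgroup.closure_induction (p := fun g _ => QOK g)
    (fun g hg => genSet_QOK g hg) ?_ ?_ ?_ hf
  · intro a; rfl
  · intro g h _ _ hgq hhq a
    rw [show ((g + h) a) = g (h a) from rfl, hgq, hhq]
  · intro g _ hgq a
    have := hgq ((-g) a)
    rw [show (g ((-g) a)) = a from by
      rw [show (g ((-g) a)) = (g + -g) a from rfl, add_neg_cancel]; rfl] at this
    exact this.symm

lemma isom_mul {A B : Matrix (Fin 5) (Fin 5) ℤ} (hA : IsIsometry gramS A)
    (hB : IsIsometry gramS B) : IsIsometry gramS (A * B) := by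
  obtain ⟨hA1, hA2⟩ := hA
  obtain ⟨hB1, hB2⟩ := hB
  refine ⟨by rw [Matrix.det_mul]; exact hA1.mul hB1, ?_⟩
  rw [Matrix.transpose_mul]
  calc Bᵀ * Aᵀ * gramS * (A * B) = Bᵀ * (Aᵀ * gramS * A) * B := by
        simp only [Matrix.mul_assoc]
    _ = Bᵀ * gramS * B := by rw [hA2]
    _ = gramS := hB2

lemma wordIsom (w : List (Fin 4)) : IsIsometry gramS ((w.map genP).prod) := by
  induction w with
  | nil =>
    refine ⟨by simp, by simp⟩
  | cons k t ih =>
    rw [List.map_cons, List.prod_cons]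
    exact isom_mul (genP_isom k) ih

lemma map_one_cast : ((1 : Matrix (Fin 5) (Fin 5) ℤ).map ((↑) : ℤ → ℚ)) = 1 :=
  Matrix.map_one _ Int.cast_zero Int.cast_one

lemma map_mul_cast (A B : Matrix (Fin 5) (Fin 5) ℤ) :
    ((A * B).map ((↑) : ℤ → ℚ)) = A.map ((↑) : ℤ → ℚ) * B.map ((↑) : ℤ → ℚ) :=
  Matrix.map_mul (f := Int.castRingHom ℚ)

lemma wordInduced (w : List (Fin 4)) :
    InducedBy gramS ((w.map genP).prod) ((w.map genA).sum) := by
  induction w with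
  | nil =>
    intro x y hxy
    rw [List.map_nil, List.prod_nil, map_one_cast, Matrix.one_mulVec] at hxy
    have hxy' : x = y := Subtype.ext hxy.symm
    subst hxy'
    rfl
  | cons k t ih =>
    intro x y hxy
    rw [List.map_cons, List.prod_cons, map_mul_cast, ← Matrix.mulVec_mulVec] at hxy
    set z : dualLattice gramS := ⟨_, dual_mulVec ((t.map genP).prod) x⟩ with hz
    have hiz : ((t.map genA).sum) (discCls gramS x) = discCls gramS z := ih x z rfl
    have hky : genA k (discCls gramS z) = discCls gramS y := inducedBy_genA k z y hxy
    rw [List.map_cons, List.sum_cons]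
    rw [show ((genA k + (t.map genA).sum) (discCls gramS x))
      = genA k (((t.map genA).sum) (discCls gramS x)) from rfl, hiz, hky]

end OqS

/-- The natural map `O(S) → O(q_S)` is surjective: every additive automorphism of
`A_S = S*/S` preserving the discriminant form `q_S` is induced by an isometry of
`S = A₁(-1) ⊕ A₁⁴`.  In fact `O(q_S)` is generated by the permutations of the last four
coordinates together with the automorphism induced by the isometry `P₀`. -/
theorem OS_to_OqS_surjective_and_generators :
    (∀ f : AddAut (discGroup gramS), PreservesQ gramS f →
      ∃ P : Matrix (Fin 5) (Fin 5) ℤ, IsIsometry gramS P ∧ InducedBy gramS P f) ∧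
    (∀ f : AddAut (discGroup gramS), PreservesQ gramS f ↔ f ∈ AddSubgroup.closure genSet) := by
  constructor
  · intro f hf
    obtain ⟨w, rfl⟩ := OqS.exists_word f ((OqS.preservesQ_iff f).mp hf)
    exact ⟨(w.map OqS.genP).prod, OqS.wordIsom w, OqS.wordInduced w⟩
  · intro f
    constructor
    · intro hf
      obtain ⟨w, rfl⟩ := OqS.exists_word f ((OqS.preservesQ_iff f).mp hf)
      refine AddSubgroup.list_sum_mem _ fun x hx => ?_
      obtain ⟨k, -, rfl⟩ := List.mem_map.mp hx
      exact AddSubgroup.subset_closure (OqS.genA_mem k)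
    · intro hf
      exact (OqS.preservesQ_iff f).mpr (OqS.closure_QOK f hf)
end

section
/- Let E_8 be ℤ^8 with its standard negative definite root lattice Gram matrix G. For every r ∈ ℤ^8 with rᵀGr = -2, the orthogonal complement r^⊥ = {x ∈ ℤ^8 : xᵀGr = 0}, with the restricted bilinear form, is a rank-7 lattice isometric to E_7 (the standard negative definite root lattice of rank 7). -/
open Matrix

/-- Gram matrix of the negative definite root lattice whose Dynkin diagram is a chain
on nodes `0, …, n-2` together with an extra node `n-1` attached to node `k`. -/
def gramRoot (n k : ℕ) : Matrix (Fin n) (Fin n) ℤ :=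
  Matrix.of fun i j =>
    if i = j then -2
    else if (((i : ℕ) + 1 = j ∨ (j : ℕ) + 1 = i) ∧ (i : ℕ) + 1 ≠ n ∧ (j : ℕ) + 1 ≠ n) ∨
        ((i : ℕ) + 1 = n ∧ (j : ℕ) = k) ∨ ((j : ℕ) + 1 = n ∧ (i : ℕ) = k) then 1
    else 0

/-- Gram matrix of the standard negative definite root lattice `E₈`. -/
def gramE8 : Matrix (Fin 8) (Fin 8) ℤ := gramRoot 8 2

/-- Gram matrix of the standard negative definite root lattice `E₇`. -/
def gramE7 : Matrix (Fin 7) (Fin 7) ℤ := gramRoot 7 2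

namespace E8aux

abbrev V8 := Fin 8 → ℤ

def bil (x y : V8) : ℤ := x ⬝ᵥ gramE8.mulVec y

lemma gramE8_symm : gramE8ᵀ = gramE8 := by decide

lemma bil_symm (x y : V8) : bil x y = bil y x := by
  unfold bil
  conv_lhs => rw [Matrix.dotProduct_mulVec, ← gramE8_symm, Matrix.vecMul_transpose]
  exact dotProduct_comm _ _

lemma bil_add_left (x y z : V8) : bil (x + y) z = bil x z + bil y z := by
  simp [bil, add_dotProduct]

lemma bil_add_right (x y z : V8) : bil x (y + z) = bil x y + bil x z := by
  simp [bil, Matrix.mulVec_add, dotProduct_add]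

lemma bil_smul_left (c : ℤ) (x y : V8) : bil (c • x) y = c * bil x y := by
  show (c • x) ⬝ᵥ gramE8.mulVec y = _
  rw [smul_dotProduct, smul_eq_mul]; rfl

lemma bil_smul_right (c : ℤ) (x y : V8) : bil x (c • y) = c * bil x y := by
  show x ⬝ᵥ gramE8.mulVec (c • y) = _
  rw [Matrix.mulVec_smul, dotProduct_smul, smul_eq_mul]; rfl

lemma bil_neg_left (x y : V8) : bil (-x) y = - bil x y := by
  simp [bil, neg_dotProduct]

lemma bil_neg_right (x y : V8) : bil x (-y) = - bil x y := by
  simp [bil, Matrix.mulVec_neg, dotProduct_neg]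

lemma bil_sub_left (x y z : V8) : bil (x - y) z = bil x z - bil y z := by
  simp [sub_eq_add_neg, bil_add_left, bil_neg_left]

lemma bil_sub_right (x y z : V8) : bil x (y - z) = bil x y - bil x z := by
  simp [sub_eq_add_neg, bil_add_right, bil_neg_right]

/-- certificate for `4 • (-gramE8) = certAᵀ * certA` (doubled Bourbaki simple roots). -/
def certA : Matrix (Fin 8) (Fin 8) ℤ :=
  !![1, -2, 0, 0, 0, 0, 0, 2; -1, 2, -2, 0, 0, 0, 0, 2; -1, 0, 2, -2, 0, 0, 0, 0;
     -1, 0, 0, 2, -2, 0, 0, 0; -1, 0, 0, 0, 2, -2, 0, 0; -1, 0, 0, 0, 0, 2, -2, 0;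
     -1, 0, 0, 0, 0, 0, 2, 0; 1, 0, 0, 0, 0, 0, 0, 0]

lemma certA_spec : certAᵀ * certA = (-4 : ℤ) • gramE8 := by decide

def Ginv : Matrix (Fin 8) (Fin 8) ℤ :=
  !![-4, -7, -10, -8, -6, -4, -2, -5; -7, -14, -20, -16, -12, -8, -4, -10;
     -10, -20, -30, -24, -18, -12, -6, -15; -8, -16, -24, -20, -15, -10, -5, -12;
     -6, -12, -18, -15, -12, -8, -4, -9; -4, -8, -12, -10, -8, -6, -3, -6;
     -2, -4, -6, -5, -4, -3, -2, -3; -5, -10, -15, -12, -9, -6, -3, -8]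

lemma Ginv_spec : Ginv * gramE8 = 1 := by decide

lemma bil_self_key (x : V8) :
    (-4) * bil x x = (certA.mulVec x) ⬝ᵥ (certA.mulVec x) := by
  have h1 : (-4 : ℤ) * bil x x = x ⬝ᵥ ((-4 : ℤ) • gramE8).mulVec x := by
    rw [Matrix.smul_mulVec, dotProduct_smul]; simp [bil]
  rw [h1, ← certA_spec, ← Matrix.mulVec_mulVec, Matrix.dotProduct_mulVec,
    Matrix.vecMul_transpose]

lemma dotSelf_nonneg (v : V8) : 0 ≤ v ⬝ᵥ v :=
  Finset.sum_nonneg fun j _ => mul_self_nonneg _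

lemma dotSelf_eq_zero (v : V8) (h : v ⬝ᵥ v = 0) : v = 0 := by
  funext i
  have h2 : ∀ j ∈ Finset.univ, 0 ≤ v j * v j := fun j _ => mul_self_nonneg _
  have := (Finset.sum_eq_zero_iff_of_nonneg h2).mp h i (Finset.mem_univ i)
  simpa [mul_self_eq_zero] using this

lemma bil_self_nonpos (x : V8) : bil x x ≤ 0 := by
  have := bil_self_key x
  have h2 := dotSelf_nonneg (certA.mulVec x)
  linarith

lemma bil_self_eq_zero (x : V8) (h : bil x x = 0) : x = 0 := by
  have h1 : certA.mulVec x ⬝ᵥ certA.mulVec x = 0 := by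
    rw [← bil_self_key, h]; ring
  have h2 : certA.mulVec x = 0 := dotSelf_eq_zero _ h1
  have h3 : gramE8.mulVec x = 0 := by
    have h4 : ((-4 : ℤ) • gramE8).mulVec x = 0 := by
      rw [← certA_spec, ← Matrix.mulVec_mulVec, h2, Matrix.mulVec_zero]
    rw [Matrix.smul_mulVec] at h4
    rcases smul_eq_zero.mp h4 with h5 | h5
    · norm_num at h5
    · exact h5
  calc x = (1 : Matrix (Fin 8) (Fin 8) ℤ).mulVec x := (Matrix.one_mulVec x).symm
    _ = (Ginv * gramE8).mulVec x := by rw [Ginv_spec]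
    _ = Ginv.mulVec (gramE8.mulVec x) := (Matrix.mulVec_mulVec _ _ _).symm
    _ = 0 := by rw [h3, Matrix.mulVec_zero]

def e (j : Fin 8) : V8 := Pi.single j 1

lemma bil_e_left (j : Fin 8) (x : V8) : bil (e j) x = gramE8.mulVec x j := by
  simp [bil, e, single_dotProduct]

lemma bil_e_e (i j : Fin 8) : bil (e i) (e j) = gramE8 i j := by
  rw [bil_e_left]
  simp [e, Matrix.mulVec_single]

/-! Reflections -/

def reflMap (s : V8) : V8 →ₗ[ℤ] V8 where
  toFun x := x + bil x s • s
  map_add' x y := by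
    show (x + y) + bil (x + y) s • s = (x + bil x s • s) + (y + bil y s • s)
    rw [bil_add_left, add_smul]; abel
  map_smul' c x := by
    show (c • x) + bil (c • x) s • s = c • (x + bil x s • s)
    rw [bil_smul_left, mul_smul, smul_add]

lemma reflMap_apply (s x : V8) : reflMap s x = x + bil x s • s := rfl

lemma reflMap_invol (s : V8) (hs : bil s s = -2) (x : V8) :
    reflMap s (reflMap s x) = x := by
  rw [reflMap_apply, reflMap_apply, bil_add_left, bil_smul_left, hs]
  have h : bil x s + bil x s * (-2) = - bil x s := by ring
  rw [h]
  module

lemma reflMap_isom (s : V8) (hs : bil s s = -2) (x y : V8) :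
    bil (reflMap s x) (reflMap s y) = bil x y := by
  rw [reflMap_apply, reflMap_apply, bil_add_left, bil_add_right, bil_add_right,
    bil_smul_left, bil_smul_left, bil_smul_right, bil_smul_right, hs, bil_symm s y]
  ring

def reflEquiv (s : V8) (hs : bil s s = -2) : V8 ≃ₗ[ℤ] V8 :=
  LinearEquiv.ofLinear (reflMap s) (reflMap s)
    (LinearMap.ext fun x => reflMap_invol s hs x)
    (LinearMap.ext fun x => reflMap_invol s hs x)

/-! Connectivity by isometries -/

def Conn (r t : V8) : Prop :=
  ∃ g : V8 ≃ₗ[ℤ] V8, (∀ x y, bil (g x) (g y) = bil x y) ∧ g r = t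

lemma Conn.rfl (r : V8) : Conn r r := ⟨LinearEquiv.refl ℤ V8, fun _ _ => by simp, by simp⟩

lemma Conn.symm {r t : V8} : Conn r t → Conn t r := by
  rintro ⟨g, hg, hr⟩
  refine ⟨g.symm, fun x y => ?_, by rw [← hr, g.symm_apply_apply]⟩
  rw [← hg (g.symm x) (g.symm y), g.apply_symm_apply, g.apply_symm_apply]

lemma Conn.trans {a b c : V8} : Conn a b → Conn b c → Conn a c := by
  rintro ⟨g, hg, hga⟩ ⟨f, hf, hfb⟩
  exact ⟨g.trans f, fun x y => by simp [LinearEquiv.trans_apply, hf, hg],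
    by simp [LinearEquiv.trans_apply, hga, hfb]⟩

lemma conn_neg (r : V8) : Conn r (-r) :=
  ⟨LinearEquiv.neg ℤ, fun x y => by
     simp [LinearEquiv.neg_apply, bil_neg_left, bil_neg_right], by simp⟩

lemma conn_reflMap (s : V8) (hs : bil s s = -2) (r : V8) : Conn r (reflMap s r) :=
  ⟨reflEquiv s hs, fun x y => reflMap_isom s hs x y, rfl⟩

lemma conn_step (r : V8) (j : Fin 8) (hr : bil r r = -2) (hj : bil r (e j) ≠ 0) :
    Conn r (e j) := by
  have hgg : ∀ i : Fin 8, gramE8 i i = -2 := by decide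
  have hee : bil (e j) (e j) = -2 := by rw [bil_e_e, hgg]
  have hsym : bil (e j) r = bil r (e j) := bil_symm _ _
  have e1 : bil (r + e j) (r + e j) = -4 + 2 * bil r (e j) := by
    rw [bil_add_left, bil_add_right, bil_add_right, hr, hee, hsym]; ring
  have e2 : bil (r - e j) (r - e j) = -4 - 2 * bil r (e j) := by
    rw [bil_sub_left, bil_sub_right, bil_sub_right, hr, hee, hsym]; ring
  have hb1 : bil (r + e j) (r + e j) ≤ 0 := bil_self_nonpos _
  have hb2 : bil (r - e j) (r - e j) ≤ 0 := bil_self_nonpos _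
  have hc1 : bil r (e j) ≤ 2 := by omega
  have hc2 : -2 ≤ bil r (e j) := by omega
  -- case on the value
  have hcase : bil r (e j) = -2 ∨ bil r (e j) = -1 ∨ bil r (e j) = 1 ∨ bil r (e j) = 2 := by
    omega
  rcases hcase with h | h | h | h
  ·
    have h0 : bil (r - e j) (r - e j) = 0 := by omega
    have := bil_self_eq_zero _ h0
    have hre : r = e j := by
      have := sub_eq_zero.mp this; exact this
    rw [hre]; exact Conn.rfl _
  · -- c = -1 : reflect in s = r - e j
    have hss : bil (r - e j) (r - e j) = -2 := by omega
    have hrs : bil r (r - e j) = -1 := by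
      rw [bil_sub_right, hr, h]; ring
    have hmap : reflMap (r - e j) r = e j := by
      rw [reflMap_apply, hrs]
      module
    have := conn_reflMap (r - e j) hss r
    rwa [hmap] at this
  · -- c = 1 : reflect in s = r + e j, lands on -e j
    have hss : bil (r + e j) (r + e j) = -2 := by omega
    have hrs : bil r (r + e j) = -1 := by
      rw [bil_add_right, hr, h]; ring
    have hmap : reflMap (r + e j) r = -(e j) := by
      rw [reflMap_apply, hrs]
      module
    have h1 := conn_reflMap (r + e j) hss r
    rw [hmap] at h1
    have h2 : Conn (-(e j)) (e j) := by
      have := conn_neg (-(e j))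
      rwa [neg_neg] at this
    exact h1.trans h2
  · -- c = 2 : r = - e j
    have h0 : bil (r + e j) (r + e j) = 0 := by omega
    have := bil_self_eq_zero _ h0
    have hre : r = -(e j) := by
      have : r = - e j := eq_neg_of_add_eq_zero_left this
      simpa using this
    rw [hre]
    have := conn_neg (-(e j))
    rwa [neg_neg] at this

lemma exists_nonorth (r : V8) (hr : bil r r = -2) : ∃ j, bil r (e j) ≠ 0 := by
  by_contra h
  push_neg at h
  have hG : gramE8.mulVec r = 0 := by
    funext j
    have h1 : gramE8.mulVec r j = bil r (e j) := by rw [bil_symm, bil_e_left]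
    rw [h1, h j]; rfl
  have hr0 : r = 0 := by
    calc r = (1 : Matrix (Fin 8) (Fin 8) ℤ).mulVec r := (Matrix.one_mulVec r).symm
      _ = (Ginv * gramE8).mulVec r := by rw [Ginv_spec]
      _ = Ginv.mulVec (gramE8.mulVec r) := (Matrix.mulVec_mulVec _ _ _).symm
      _ = 0 := by rw [hG, Matrix.mulVec_zero]
  rw [hr0] at hr
  simp [bil, Matrix.mulVec_zero] at hr


lemma conn_e_e (i j : Fin 8) (hij : gramE8 i j = 1) : Conn (e i) (e j) := by
  have hgg : ∀ a : Fin 8, gramE8 a a = -2 := by decide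
  have h1 : bil (e i) (e i) = -2 := by rw [bil_e_e, hgg]
  have h2 : bil (e i) (e j) = 1 := by rw [bil_e_e, hij]
  exact conn_step (e i) j h1 (by rw [h2]; norm_num)

lemma conn_to_e0 (j : Fin 8) : Conn (e j) (e 0) := by
  have c10 : Conn (e 1) (e 0) := conn_e_e 1 0 (by decide)
  have c21 : Conn (e 2) (e 1) := conn_e_e 2 1 (by decide)
  have c32 : Conn (e 3) (e 2) := conn_e_e 3 2 (by decide)
  have c43 : Conn (e 4) (e 3) := conn_e_e 4 3 (by decide)
  have c54 : Conn (e 5) (e 4) := conn_e_e 5 4 (by decide)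
  have c65 : Conn (e 6) (e 5) := conn_e_e 6 5 (by decide)
  have c72 : Conn (e 7) (e 2) := conn_e_e 7 2 (by decide)
  have c20 : Conn (e 2) (e 0) := c21.trans c10
  fin_cases j
  · exact Conn.rfl _
  · exact c10
  · exact c20
  · exact c32.trans c20
  · exact c43.trans (c32.trans c20)
  · exact c54.trans (c43.trans (c32.trans c20))
  · exact c65.trans (c54.trans (c43.trans (c32.trans c20)))
  · exact c72.trans c20

lemma conn_root (r : V8) (hr : bil r r = -2) : Conn (e 0) r := by
  obtain ⟨j, hj⟩ := exists_nonorth r hr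
  exact ((conn_step r j hr hj).trans (conn_to_e0 j)).symm

/-! The explicit `E₇` inside `e 0 ^ ⊥` -/

def matM : Matrix (Fin 8) (Fin 7) ℤ :=
  !![0, 0, 0, 0, 0, 0, 1; 0, 0, 0, 0, 0, 0, 2; 0, 0, 0, 0, 1, 0, 2; 0, 0, 0, 1, 0, 0, 1;
     0, 0, 1, 0, 0, 0, 0; 0, 1, 0, 0, 0, 0, 0; 1, 0, 0, 0, 0, 0, 0; 0, 0, 0, 0, 0, 1, 1]

def matN : Matrix (Fin 7) (Fin 8) ℤ :=
  !![0, 0, 0, 0, 0, 0, 1, 0; 0, 0, 0, 0, 0, 1, 0, 0; 0, 0, 0, 0, 1, 0, 0, 0;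
     -1, 0, 0, 1, 0, 0, 0, 0; -2, 0, 1, 0, 0, 0, 0, 0; -1, 0, 0, 0, 0, 0, 0, 1;
     1, 0, 0, 0, 0, 0, 0, 0]

lemma matN_matM : matN * matM = 1 := by decide

lemma matM_isom_key : matMᵀ * (gramE8 * matM) = gramE7 := by decide

lemma matM_inj (x y : Fin 7 → ℤ) (h : matM.mulVec x = matM.mulVec y) : x = y := by
  have h1 : matN.mulVec (matM.mulVec x) = matN.mulVec (matM.mulVec y) := by rw [h]
  rwa [Matrix.mulVec_mulVec, Matrix.mulVec_mulVec, matN_matM, Matrix.one_mulVec,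
    Matrix.one_mulVec] at h1

lemma matM_isom (x y : Fin 7 → ℤ) :
    bil (matM.mulVec x) (matM.mulVec y) = x ⬝ᵥ gramE7.mulVec y := by
  unfold bil
  rw [Matrix.mulVec_mulVec, ← Matrix.vecMul_transpose, Matrix.dotProduct_mulVec,
    Matrix.vecMul_vecMul, matM_isom_key, ← Matrix.dotProduct_mulVec]

lemma matM_orth (v : Fin 7 → ℤ) : bil (matM.mulVec v) (e 0) = 0 := by
  rw [bil_symm, bil_e_left, Matrix.mulVec_mulVec]
  have h : (fun j => (gramE8 * matM) 0 j) = (0 : Fin 7 → ℤ) := by decide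
  show (fun j => (gramE8 * matM) 0 j) ⬝ᵥ v = 0
  rw [h, zero_dotProduct]

def uvec : V8 := fun j => gramE8 j 0

lemma vecMulVec_mulVec (v w x : V8) :
    (Matrix.vecMulVec v w).mulVec x = (w ⬝ᵥ x) • v := by
  funext i
  simp only [Matrix.mulVec, Matrix.vecMulVec_apply, dotProduct, Pi.smul_apply, smul_eq_mul]
  rw [Finset.sum_mul]
  exact Finset.sum_congr rfl fun j _ => by ring

lemma uvec_dot (y : V8) : uvec ⬝ᵥ y = bil y (e 0) := by
  have h : gramE8.mulVec (e 0) = uvec := by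
    funext i
    show gramE8.mulVec (Pi.single 0 1) i = gramE8 i 0
    rw [Matrix.mulVec_single]
    exact mul_one _
  rw [bil, h, dotProduct_comm]

lemma matM_matN_split : matM * matN = 1 - Matrix.vecMulVec (Pi.single 1 1) uvec := by
  decide

lemma matM_surj (y : V8) (hy : bil y (e 0) = 0) :
    matM.mulVec (matN.mulVec y) = y := by
  rw [Matrix.mulVec_mulVec, matM_matN_split, Matrix.sub_mulVec, Matrix.one_mulVec,
    vecMulVec_mulVec, uvec_dot, hy, zero_smul, sub_zero]

end E8aux

/-- For every root `r` of `E₈` (a vector with `B(r,r) = -2`), the orthogonal complement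
`r^⊥ = {x ∈ ℤ⁸ : B(x,r) = 0}` with the restricted form is a rank-7 lattice isometric
to `E₇`: there is an injective linear map `ℤ⁷ → ℤ⁸` with image `r^⊥` carrying the `E₇`
form to the restriction of the `E₈` form. -/
theorem root_complement_in_E8_is_E7 (r : Fin 8 → ℤ) (hr : r ⬝ᵥ gramE8.mulVec r = -2) :
    ∃ φ : (Fin 7 → ℤ) →ₗ[ℤ] (Fin 8 → ℤ),
      Function.Injective φ ∧
      Set.range φ = {x : Fin 8 → ℤ | x ⬝ᵥ gramE8.mulVec r = 0} ∧
      ∀ x y : Fin 7 → ℤ, (φ x) ⬝ᵥ gramE8.mulVec (φ y) = x ⬝ᵥ gramE7.mulVec y := by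
  obtain ⟨g, hg, hge⟩ := E8aux.conn_root r hr
  refine ⟨g.toLinearMap ∘ₗ E8aux.matM.mulVecLin, ?_, ?_, ?_⟩
  · intro x y hxy
    simp only [LinearMap.coe_comp, Function.comp_apply, Matrix.mulVecLin_apply,
      LinearEquiv.coe_coe] at hxy
    exact E8aux.matM_inj x y (g.injective hxy)
  · ext x
    simp only [Set.mem_range, Set.mem_setOf_eq, LinearMap.coe_comp, Function.comp_apply,
      Matrix.mulVecLin_apply, LinearEquiv.coe_coe]
    constructor
    · rintro ⟨v, rfl⟩
      have key : E8aux.bil (g (E8aux.matM.mulVec v)) r = 0 := by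
        rw [← hge, hg]
        exact E8aux.matM_orth v
      exact key
    · intro hx
      refine ⟨E8aux.matN.mulVec (g.symm x), ?_⟩
      have h1 : E8aux.bil (g.symm x) (E8aux.e 0) = 0 := by
        rw [← hg (g.symm x) (E8aux.e 0), g.apply_symm_apply, hge]
        exact hx
      rw [E8aux.matM_surj (g.symm x) h1, g.apply_symm_apply]
  · intro x y
    simp only [LinearMap.coe_comp, Function.comp_apply, Matrix.mulVecLin_apply,
      LinearEquiv.coe_coe]
    have key : E8aux.bil (g (E8aux.matM.mulVec x)) (g (E8aux.matM.mulVec y)) =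
        x ⬝ᵥ gramE7.mulVec y := by
      rw [hg]
      exact E8aux.matM_isom x y
    exact key
end

section
/- The lattice T = U⊕U⊕E_8⊕A_1^5 is isometric to U⊕U(2)⊕A_1⊕D_4⊕E_8: there exists P ∈ GL(17,ℤ) with PᵀG_1P = G_2, where G_1 is the block-diagonal Gram matrix of U⊕U⊕E_8⊕A_1^5 and G_2 that of U⊕U(2)⊕A_1⊕D_4⊕E_8. -/
open Matrix

/-- Gram matrix of the hyperbolic plane `U`. -/
def gramU : Matrix (Fin 2) (Fin 2) ℤ := !![0, 1; 1, 0]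

/-- Gram matrix of `U(2)`. -/
def gramU2 : Matrix (Fin 2) (Fin 2) ℤ := !![0, 2; 2, 0]

/-- Gram matrix of `A₁`. -/
def gramA1 : Matrix (Fin 1) (Fin 1) ℤ := !![-2]

/-- Gram matrix of the standard negative definite root lattice `D₄`. -/
def gramD4 : Matrix (Fin 4) (Fin 4) ℤ := gramRoot 4 1

/-- Gram matrix of the standard negative definite root lattice `D₆`. -/
def gramD6 : Matrix (Fin 6) (Fin 6) ℤ := gramRoot 6 1

/-- Gram matrix of the standard negative definite root lattice `D₁₂`. -/
def gramD12 : Matrix (Fin 12) (Fin 12) ℤ := gramRoot 12 1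

/-- Orthogonal (block diagonal) sum of two Gram matrices. -/
def blockSum {m n : ℕ} (A : Matrix (Fin m) (Fin m) ℤ) (B : Matrix (Fin n) (Fin n) ℤ) :
    Matrix (Fin (m + n)) (Fin (m + n)) ℤ :=
  Matrix.of fun i j =>
    if hi : (i : ℕ) < m then
      if hj : (j : ℕ) < m then A ⟨i, hi⟩ ⟨j, hj⟩ else 0
    else
      if hj : (j : ℕ) < m then 0
      else B ⟨(i : ℕ) - m, by have := i.isLt; omega⟩ ⟨(j : ℕ) - m, by have := j.isLt; omega⟩

/-- Gram matrix of `T = U ⊕ U ⊕ E₈ ⊕ A₁⁵`. -/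
def gramT : Matrix (Fin 17) (Fin 17) ℤ :=
  blockSum gramU (blockSum gramU (blockSum gramE8 (Matrix.diagonal fun _ : Fin 5 => (-2 : ℤ))))

/-- Gram matrix of `U ⊕ U(2) ⊕ A₁ ⊕ D₄ ⊕ E₈`. -/
def gramT' : Matrix (Fin 17) (Fin 17) ℤ :=
  blockSum gramU (blockSum gramU2 (blockSum gramA1 (blockSum gramD4 gramE8)))

def Pmat : Matrix (Fin 17) (Fin 17) ℤ :=
  !![1, 0, 0, 0, 0, 0, 0, 0, 0, 0, 0, 0, 0, 0, 0, 0, 0;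
  0, 1, 0, 0, 0, 0, 0, 0, 0, 0, 0, 0, 0, 0, 0, 0, 0;
  0, 0, 2, 2, 2, 0, 1, 0, 0, 0, 0, 0, 0, 0, 0, 0, 0;
  0, 0, 2, 2, 2, -1, 0, 1, 1, 0, 0, 0, 0, 0, 0, 0, 0;
  0, 0, 0, 0, 0, 0, 0, 0, 0, 1, 0, 0, 0, 0, 0, 0, 0;
  0, 0, 0, 0, 0, 0, 0, 0, 0, 0, 1, 0, 0, 0, 0, 0, 0;
  0, 0, 0, 0, 0, 0, 0, 0, 0, 0, 0, 1, 0, 0, 0, 0, 0;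
  0, 0, 0, 0, 0, 0, 0, 0, 0, 0, 0, 0, 1, 0, 0, 0, 0;
  0, 0, 0, 0, 0, 0, 0, 0, 0, 0, 0, 0, 0, 1, 0, 0, 0;
  0, 0, 0, 0, 0, 0, 0, 0, 0, 0, 0, 0, 0, 0, 1, 0, 0;
  0, 0, 0, 0, 0, 0, 0, 0, 0, 0, 0, 0, 0, 0, 0, 1, 0;
  0, 0, 0, 0, 0, 0, 0, 0, 0, 0, 0, 0, 0, 0, 0, 0, 1;
  0, 0, -1, -1, -1, 0, 0, -1, 0, 0, 0, 0, 0, 0, 0, 0, 0;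
  0, 0, -1, -1, -1, 0, 0, 0, -1, 0, 0, 0, 0, 0, 0, 0, 0;
  0, 0, -1, -1, -1, 1, -1, 0, 0, 0, 0, 0, 0, 0, 0, 0, 0;
  0, 0, -1, 0, -1, 0, 0, 0, 0, 0, 0, 0, 0, 0, 0, 0, 0;
  0, 0, 0, -1, -1, 0, 0, 0, 0, 0, 0, 0, 0, 0, 0, 0, 0]

def PmatT : Matrix (Fin 17) (Fin 17) ℤ :=
  !![1, 0, 0, 0, 0, 0, 0, 0, 0, 0, 0, 0, 0, 0, 0, 0, 0;
  0, 1, 0, 0, 0, 0, 0, 0, 0, 0, 0, 0, 0, 0, 0, 0, 0;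
  0, 0, 2, 2, 0, 0, 0, 0, 0, 0, 0, 0, -1, -1, -1, -1, 0;
  0, 0, 2, 2, 0, 0, 0, 0, 0, 0, 0, 0, -1, -1, -1, 0, -1;
  0, 0, 2, 2, 0, 0, 0, 0, 0, 0, 0, 0, -1, -1, -1, -1, -1;
  0, 0, 0, -1, 0, 0, 0, 0, 0, 0, 0, 0, 0, 0, 1, 0, 0;
  0, 0, 1, 0, 0, 0, 0, 0, 0, 0, 0, 0, 0, 0, -1, 0, 0;
  0, 0, 0, 1, 0, 0, 0, 0, 0, 0, 0, 0, -1, 0, 0, 0, 0;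
  0, 0, 0, 1, 0, 0, 0, 0, 0, 0, 0, 0, 0, -1, 0, 0, 0;
  0, 0, 0, 0, 1, 0, 0, 0, 0, 0, 0, 0, 0, 0, 0, 0, 0;
  0, 0, 0, 0, 0, 1, 0, 0, 0, 0, 0, 0, 0, 0, 0, 0, 0;
  0, 0, 0, 0, 0, 0, 1, 0, 0, 0, 0, 0, 0, 0, 0, 0, 0;
  0, 0, 0, 0, 0, 0, 0, 1, 0, 0, 0, 0, 0, 0, 0, 0, 0;
  0, 0, 0, 0, 0, 0, 0, 0, 1, 0, 0, 0, 0, 0, 0, 0, 0;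
  0, 0, 0, 0, 0, 0, 0, 0, 0, 1, 0, 0, 0, 0, 0, 0, 0;
  0, 0, 0, 0, 0, 0, 0, 0, 0, 0, 1, 0, 0, 0, 0, 0, 0;
  0, 0, 0, 0, 0, 0, 0, 0, 0, 0, 0, 1, 0, 0, 0, 0, 0]

def PmatInv : Matrix (Fin 17) (Fin 17) ℤ :=
  !![1, 0, 0, 0, 0, 0, 0, 0, 0, 0, 0, 0, 0, 0, 0, 0, 0;
  0, 1, 0, 0, 0, 0, 0, 0, 0, 0, 0, 0, 0, 0, 0, 0, 0;
  0, 0, 1, 1, 0, 0, 0, 0, 0, 0, 0, 0, 1, 1, 1, 0, 1;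
  0, 0, 1, 1, 0, 0, 0, 0, 0, 0, 0, 0, 1, 1, 1, 1, 0;
  0, 0, -1, -1, 0, 0, 0, 0, 0, 0, 0, 0, -1, -1, -1, -1, -1;
  0, 0, 0, -1, 0, 0, 0, 0, 0, 0, 0, 0, -1, -1, 0, 0, 0;
  0, 0, -1, -2, 0, 0, 0, 0, 0, 0, 0, 0, -2, -2, -2, 0, 0;
  0, 0, -1, -1, 0, 0, 0, 0, 0, 0, 0, 0, -2, -1, -1, 0, 0;
  0, 0, -1, -1, 0, 0, 0, 0, 0, 0, 0, 0, -1, -2, -1, 0, 0;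
  0, 0, 0, 0, 1, 0, 0, 0, 0, 0, 0, 0, 0, 0, 0, 0, 0;
  0, 0, 0, 0, 0, 1, 0, 0, 0, 0, 0, 0, 0, 0, 0, 0, 0;
  0, 0, 0, 0, 0, 0, 1, 0, 0, 0, 0, 0, 0, 0, 0, 0, 0;
  0, 0, 0, 0, 0, 0, 0, 1, 0, 0, 0, 0, 0, 0, 0, 0, 0;
  0, 0, 0, 0, 0, 0, 0, 0, 1, 0, 0, 0, 0, 0, 0, 0, 0;
  0, 0, 0, 0, 0, 0, 0, 0, 0, 1, 0, 0, 0, 0, 0, 0, 0;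
  0, 0, 0, 0, 0, 0, 0, 0, 0, 0, 1, 0, 0, 0, 0, 0, 0;
  0, 0, 0, 0, 0, 0, 0, 0, 0, 0, 0, 1, 0, 0, 0, 0, 0]

def GT : Matrix (Fin 17) (Fin 17) ℤ :=
  !![0, 1, 0, 0, 0, 0, 0, 0, 0, 0, 0, 0, 0, 0, 0, 0, 0;
  1, 0, 0, 0, 0, 0, 0, 0, 0, 0, 0, 0, 0, 0, 0, 0, 0;
  0, 0, 0, 1, 0, 0, 0, 0, 0, 0, 0, 0, 0, 0, 0, 0, 0;
  0, 0, 1, 0, 0, 0, 0, 0, 0, 0, 0, 0, 0, 0, 0, 0, 0;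
  0, 0, 0, 0, -2, 1, 0, 0, 0, 0, 0, 0, 0, 0, 0, 0, 0;
  0, 0, 0, 0, 1, -2, 1, 0, 0, 0, 0, 0, 0, 0, 0, 0, 0;
  0, 0, 0, 0, 0, 1, -2, 1, 0, 0, 0, 1, 0, 0, 0, 0, 0;
  0, 0, 0, 0, 0, 0, 1, -2, 1, 0, 0, 0, 0, 0, 0, 0, 0;
  0, 0, 0, 0, 0, 0, 0, 1, -2, 1, 0, 0, 0, 0, 0, 0, 0;
  0, 0, 0, 0, 0, 0, 0, 0, 1, -2, 1, 0, 0, 0, 0, 0, 0;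
  0, 0, 0, 0, 0, 0, 0, 0, 0, 1, -2, 0, 0, 0, 0, 0, 0;
  0, 0, 0, 0, 0, 0, 1, 0, 0, 0, 0, -2, 0, 0, 0, 0, 0;
  0, 0, 0, 0, 0, 0, 0, 0, 0, 0, 0, 0, -2, 0, 0, 0, 0;
  0, 0, 0, 0, 0, 0, 0, 0, 0, 0, 0, 0, 0, -2, 0, 0, 0;
  0, 0, 0, 0, 0, 0, 0, 0, 0, 0, 0, 0, 0, 0, -2, 0, 0;
  0, 0, 0, 0, 0, 0, 0, 0, 0, 0, 0, 0, 0, 0, 0, -2, 0;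
  0, 0, 0, 0, 0, 0, 0, 0, 0, 0, 0, 0, 0, 0, 0, 0, -2]

def GT' : Matrix (Fin 17) (Fin 17) ℤ :=
  !![0, 1, 0, 0, 0, 0, 0, 0, 0, 0, 0, 0, 0, 0, 0, 0, 0;
  1, 0, 0, 0, 0, 0, 0, 0, 0, 0, 0, 0, 0, 0, 0, 0, 0;
  0, 0, 0, 2, 0, 0, 0, 0, 0, 0, 0, 0, 0, 0, 0, 0, 0;
  0, 0, 2, 0, 0, 0, 0, 0, 0, 0, 0, 0, 0, 0, 0, 0, 0;
  0, 0, 0, 0, -2, 0, 0, 0, 0, 0, 0, 0, 0, 0, 0, 0, 0;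
  0, 0, 0, 0, 0, -2, 1, 0, 0, 0, 0, 0, 0, 0, 0, 0, 0;
  0, 0, 0, 0, 0, 1, -2, 1, 1, 0, 0, 0, 0, 0, 0, 0, 0;
  0, 0, 0, 0, 0, 0, 1, -2, 0, 0, 0, 0, 0, 0, 0, 0, 0;
  0, 0, 0, 0, 0, 0, 1, 0, -2, 0, 0, 0, 0, 0, 0, 0, 0;
  0, 0, 0, 0, 0, 0, 0, 0, 0, -2, 1, 0, 0, 0, 0, 0, 0;
  0, 0, 0, 0, 0, 0, 0, 0, 0, 1, -2, 1, 0, 0, 0, 0, 0;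
  0, 0, 0, 0, 0, 0, 0, 0, 0, 0, 1, -2, 1, 0, 0, 0, 1;
  0, 0, 0, 0, 0, 0, 0, 0, 0, 0, 0, 1, -2, 1, 0, 0, 0;
  0, 0, 0, 0, 0, 0, 0, 0, 0, 0, 0, 0, 1, -2, 1, 0, 0;
  0, 0, 0, 0, 0, 0, 0, 0, 0, 0, 0, 0, 0, 1, -2, 1, 0;
  0, 0, 0, 0, 0, 0, 0, 0, 0, 0, 0, 0, 0, 0, 1, -2, 0;
  0, 0, 0, 0, 0, 0, 0, 0, 0, 0, 0, 1, 0, 0, 0, 0, -2]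

def Mmid : Matrix (Fin 17) (Fin 17) ℤ :=
  !![0, 1, 0, 0, 0, 0, 0, 0, 0, 0, 0, 0, 0, 0, 0, 0, 0;
  1, 0, 0, 0, 0, 0, 0, 0, 0, 0, 0, 0, 0, 0, 0, 0, 0;
  0, 0, 2, 2, 0, 0, 0, 0, 0, 0, 0, 0, 2, 2, 2, 2, 0;
  0, 0, 2, 2, 0, 0, 0, 0, 0, 0, 0, 0, 2, 2, 2, 0, 2;
  0, 0, 2, 2, 0, 0, 0, 0, 0, 0, 0, 0, 2, 2, 2, 2, 2;
  0, 0, -1, 0, 0, 0, 0, 0, 0, 0, 0, 0, 0, 0, -2, 0, 0;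
  0, 0, 0, 1, 0, 0, 0, 0, 0, 0, 0, 0, 0, 0, 2, 0, 0;
  0, 0, 1, 0, 0, 0, 0, 0, 0, 0, 0, 0, 2, 0, 0, 0, 0;
  0, 0, 1, 0, 0, 0, 0, 0, 0, 0, 0, 0, 0, 2, 0, 0, 0;
  0, 0, 0, 0, -2, 1, 0, 0, 0, 0, 0, 0, 0, 0, 0, 0, 0;
  0, 0, 0, 0, 1, -2, 1, 0, 0, 0, 0, 0, 0, 0, 0, 0, 0;
  0, 0, 0, 0, 0, 1, -2, 1, 0, 0, 0, 1, 0, 0, 0, 0, 0;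
  0, 0, 0, 0, 0, 0, 1, -2, 1, 0, 0, 0, 0, 0, 0, 0, 0;
  0, 0, 0, 0, 0, 0, 0, 1, -2, 1, 0, 0, 0, 0, 0, 0, 0;
  0, 0, 0, 0, 0, 0, 0, 0, 1, -2, 1, 0, 0, 0, 0, 0, 0;
  0, 0, 0, 0, 0, 0, 0, 0, 0, 1, -2, 0, 0, 0, 0, 0, 0;
  0, 0, 0, 0, 0, 0, 1, 0, 0, 0, 0, -2, 0, 0, 0, 0, 0]

def GT'' : Matrix (Fin 17) (Fin 17) ℤ :=
  !![1, 0, 0, 0, 0, 0, 0, 0, 0, 0, 0, 0, 0, 0, 0, 0, 0;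
  0, 1, 0, 0, 0, 0, 0, 0, 0, 0, 0, 0, 0, 0, 0, 0, 0;
  0, 0, 1, 0, 0, 0, 0, 0, 0, 0, 0, 0, 0, 0, 0, 0, 0;
  0, 0, 0, 1, 0, 0, 0, 0, 0, 0, 0, 0, 0, 0, 0, 0, 0;
  0, 0, 0, 0, 1, 0, 0, 0, 0, 0, 0, 0, 0, 0, 0, 0, 0;
  0, 0, 0, 0, 0, 1, 0, 0, 0, 0, 0, 0, 0, 0, 0, 0, 0;
  0, 0, 0, 0, 0, 0, 1, 0, 0, 0, 0, 0, 0, 0, 0, 0, 0;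
  0, 0, 0, 0, 0, 0, 0, 1, 0, 0, 0, 0, 0, 0, 0, 0, 0;
  0, 0, 0, 0, 0, 0, 0, 0, 1, 0, 0, 0, 0, 0, 0, 0, 0;
  0, 0, 0, 0, 0, 0, 0, 0, 0, 1, 0, 0, 0, 0, 0, 0, 0;
  0, 0, 0, 0, 0, 0, 0, 0, 0, 0, 1, 0, 0, 0, 0, 0, 0;
  0, 0, 0, 0, 0, 0, 0, 0, 0, 0, 0, 1, 0, 0, 0, 0, 0;
  0, 0, 0, 0, 0, 0, 0, 0, 0, 0, 0, 0, 1, 0, 0, 0, 0;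
  0, 0, 0, 0, 0, 0, 0, 0, 0, 0, 0, 0, 0, 1, 0, 0, 0;
  0, 0, 0, 0, 0, 0, 0, 0, 0, 0, 0, 0, 0, 0, 1, 0, 0;
  0, 0, 0, 0, 0, 0, 0, 0, 0, 0, 0, 0, 0, 0, 0, 1, 0;
  0, 0, 0, 0, 0, 0, 0, 0, 0, 0, 0, 0, 0, 0, 0, 0, 1]

set_option maxRecDepth 100000 in
set_option maxHeartbeats 4000000 in
lemma hT : Pmatᵀ = PmatT := by decide

set_option maxRecDepth 100000 in
set_option maxHeartbeats 4000000 in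
lemma hInv : Pmat * PmatInv = 1 := by
  have h1 : Pmat * PmatInv = GT'' := by decide
  have h2 : GT'' = (1 : Matrix (Fin 17) (Fin 17) ℤ) := by decide
  rw [h1, h2]

set_option maxRecDepth 100000 in
lemma hG1 : gramT = GT := by decide

set_option maxRecDepth 100000 in
lemma hG2 : gramT' = GT' := by decide

set_option maxRecDepth 100000 in
set_option maxHeartbeats 4000000 in
lemma hA : PmatT * GT = Mmid := by decide

set_option maxRecDepth 100000 in
set_option maxHeartbeats 4000000 in
lemma hB : Mmid * Pmat = GT' := by decide

/-- The lattice `T = U ⊕ U ⊕ E₈ ⊕ A₁⁵` is isometric to `U ⊕ U(2) ⊕ A₁ ⊕ D₄ ⊕ E₈`. -/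
theorem T_isometric_to_U_U2_A1_D4_E8 :
    ∃ P : Matrix (Fin 17) (Fin 17) ℤ, IsUnit P.det ∧ Pᵀ * gramT * P = gramT' := by
  refine ⟨Pmat, ?_, ?_⟩
  · have := invertibleOfRightInverse Pmat PmatInv hInv
    exact Matrix.isUnit_det_of_invertible Pmat
  · rw [hG1, hG2, hT, Matrix.mul_assoc, ← hB, ← hA, Matrix.mul_assoc]
end

section
/- Let L_K3 = ℤ^22 with the block-diagonal Gram matrix of U⊕U⊕U⊕E_8⊕E_8 (the K3 lattice, the even unimodular lattice of signature (3,19)), and let S = ℤ^5 with Gram diag(2,-2,-2,-2,-2). There exists an injective ℤ-linear map φ : ℤ^5 → ℤ^22 which is an isometric embedding (B_{K3}(φx,φy) = B_S(x,y) for all x,y), whose image is a primitive submodule (ℤ^22/φ(ℤ^5) is torsion-free), and such that the orthogonal complement φ(ℤ^5)^⊥ = {x ∈ ℤ^22 : B_{K3}(x,φ(ℤ^5)) = 0}, with the restricted form, is isometric to T = U⊕U⊕E_8⊕A_1^5. -/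
open Matrix

/-- Gram matrix of the K3 lattice `L_{K3} = U ⊕ U ⊕ U ⊕ E₈ ⊕ E₈`. -/
def gramK3 : Matrix (Fin 22) (Fin 22) ℤ :=
  blockSum gramU (blockSum gramU (blockSum gramU (blockSum gramE8 gramE8)))

def matA : Matrix (Fin 22) (Fin 5) ℤ :=
  !![0, 0, 0, 0, 0;
    0, 0, 0, 0, 0;
    0, 0, 0, 0, 0;
    0, 0, 0, 0, 0;
    1, 0, 0, 0, 0;
    1, 0, 0, 0, 0;
    0, 0, 0, 0, 0;
    0, 0, 0, 0, 0;
    0, 0, 0, 0, 0;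
    0, 0, 0, 0, 0;
    0, 0, 0, 0, 0;
    0, 0, 0, 0, 0;
    0, 0, 0, 0, 0;
    0, 0, 0, 0, 0;
    0, 0, -1, 0, 0;
    0, 0, -1, 0, 0;
    0, 1, -1, 0, 0;
    0, 1, -1, 0, 1;
    0, 1, -1, 1, 1;
    0, 1, -1, 0, 1;
    0, 0, 0, 0, 1;
    0, 0, -1, 0, 0]
def matB : Matrix (Fin 22) (Fin 17) ℤ :=
  !![1, 0, 0, 0, 0, 0, 0, 0, 0, 0, 0, 0, 0, 0, 0, 0, 0;
    0, 1, 0, 0, 0, 0, 0, 0, 0, 0, 0, 0, 0, 0, 0, 0, 0;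
    0, 0, 1, 0, 0, 0, 0, 0, 0, 0, 0, 0, 0, 0, 0, 0, 0;
    0, 0, 0, 1, 0, 0, 0, 0, 0, 0, 0, 0, 0, 0, 0, 0, 0;
    0, 0, 0, 0, 0, 0, 0, 0, 0, 0, 0, 0, -1, 0, 0, 0, 0;
    0, 0, 0, 0, 0, 0, 0, 0, 0, 0, 0, 0, 1, 0, 0, 0, 0;
    0, 0, 0, 0, 1, 0, 0, 0, 0, 0, 0, 0, 0, 0, 0, 0, 0;
    0, 0, 0, 0, 0, 1, 0, 0, 0, 0, 0, 0, 0, 0, 0, 0, 0;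
    0, 0, 0, 0, 0, 0, 1, 0, 0, 0, 0, 0, 0, 0, 0, 0, 0;
    0, 0, 0, 0, 0, 0, 0, 1, 0, 0, 0, 0, 0, 0, 0, 0, 0;
    0, 0, 0, 0, 0, 0, 0, 0, 1, 0, 0, 0, 0, 0, 0, 0, 0;
    0, 0, 0, 0, 0, 0, 0, 0, 0, 1, 0, 0, 0, 0, 0, 0, 0;
    0, 0, 0, 0, 0, 0, 0, 0, 0, 0, 1, 0, 0, 0, 0, 0, 0;
    0, 0, 0, 0, 0, 0, 0, 0, 0, 0, 0, 1, 0, 0, 0, 0, 0;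
    0, 0, 0, 0, 0, 0, 0, 0, 0, 0, 0, 0, 0, 1, 1, 2, -1;
    0, 0, 0, 0, 0, 0, 0, 0, 0, 0, 0, 0, 0, 1, 1, 4, -3;
    0, 0, 0, 0, 0, 0, 0, 0, 0, 0, 0, 0, 0, 2, 2, 5, -5;
    0, 0, 0, 0, 0, 0, 0, 0, 0, 0, 0, 0, 0, 2, 1, 4, -4;
    0, 0, 0, 0, 0, 0, 0, 0, 0, 0, 0, 0, 0, 1, 1, 3, -3;
    0, 0, 0, 0, 0, 0, 0, 0, 0, 0, 0, 0, 0, 0, 1, 2, -2;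
    0, 0, 0, 0, 0, 0, 0, 0, 0, 0, 0, 0, 0, 0, 1, 1, -1;
    0, 0, 0, 0, 0, 0, 0, 0, 0, 0, 0, 0, 0, 1, 1, 2, -3]
def matL : Matrix (Fin 5) (Fin 22) ℤ :=
  !![0, 0, 0, 0, 1, 0, 0, 0, 0, 0, 0, 0, 0, 0, 0, 0, 0, 0, 0, 0, 0, 0;
    0, 0, 0, 0, 0, 0, 0, 0, 0, 0, 0, 0, 0, 0, -1, 0, 1, 0, 0, 0, 0, 0;
    0, 0, 0, 0, 0, 0, 0, 0, 0, 0, 0, 0, 0, 0, -1, 0, 0, 0, 0, 0, 0, 0;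
    0, 0, 0, 0, 0, 0, 0, 0, 0, 0, 0, 0, 0, 0, 0, 0, 0, -1, 1, 0, 0, 0;
    0, 0, 0, 0, 0, 0, 0, 0, 0, 0, 0, 0, 0, 0, 0, 0, -1, 1, 0, 0, 0, 0]
def matM : Matrix (Fin 17) (Fin 22) ℤ :=
  !![1, 0, 0, 0, 0, 0, 0, 0, 0, 0, 0, 0, 0, 0, 0, 0, 0, 0, 0, 0, 0, 0;
    0, 1, 0, 0, 0, 0, 0, 0, 0, 0, 0, 0, 0, 0, 0, 0, 0, 0, 0, 0, 0, 0;
    0, 0, 1, 0, 0, 0, 0, 0, 0, 0, 0, 0, 0, 0, 0, 0, 0, 0, 0, 0, 0, 0;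
    0, 0, 0, 1, 0, 0, 0, 0, 0, 0, 0, 0, 0, 0, 0, 0, 0, 0, 0, 0, 0, 0;
    0, 0, 0, 0, 0, 0, 1, 0, 0, 0, 0, 0, 0, 0, 0, 0, 0, 0, 0, 0, 0, 0;
    0, 0, 0, 0, 0, 0, 0, 1, 0, 0, 0, 0, 0, 0, 0, 0, 0, 0, 0, 0, 0, 0;
    0, 0, 0, 0, 0, 0, 0, 0, 1, 0, 0, 0, 0, 0, 0, 0, 0, 0, 0, 0, 0, 0;
    0, 0, 0, 0, 0, 0, 0, 0, 0, 1, 0, 0, 0, 0, 0, 0, 0, 0, 0, 0, 0, 0;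
    0, 0, 0, 0, 0, 0, 0, 0, 0, 0, 1, 0, 0, 0, 0, 0, 0, 0, 0, 0, 0, 0;
    0, 0, 0, 0, 0, 0, 0, 0, 0, 0, 0, 1, 0, 0, 0, 0, 0, 0, 0, 0, 0, 0;
    0, 0, 0, 0, 0, 0, 0, 0, 0, 0, 0, 0, 1, 0, 0, 0, 0, 0, 0, 0, 0, 0;
    0, 0, 0, 0, 0, 0, 0, 0, 0, 0, 0, 0, 0, 1, 0, 0, 0, 0, 0, 0, 0, 0;
    0, 0, 0, 0, -1, 0, 0, 0, 0, 0, 0, 0, 0, 0, 0, 0, 0, 0, 0, 0, 0, 0;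
    0, 0, 0, 0, 0, 0, 0, 0, 0, 0, 0, 0, 0, 0, 0, 0, 1, 1, -3, 0, 0, 0;
    0, 0, 0, 0, 0, 0, 0, 0, 0, 0, 0, 0, 0, 0, 0, 0, 2, -1, -2, 0, 0, 0;
    0, 0, 0, 0, 0, 0, 0, 0, 0, 0, 0, 0, 0, 0, 1, 0, -2, 0, 3, 0, 0, 0;
    0, 0, 0, 0, 0, 0, 0, 0, 0, 0, 0, 0, 0, 0, 1, 0, -1, 0, 1, 0, 0, 0]
def matN : Matrix (Fin 22) (Fin 5) ℤ :=
  !![0, 0, 0, 0, 0;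
    0, 0, 0, 0, 0;
    0, 0, 0, 0, 0;
    0, 0, 0, 0, 0;
    0, 0, 0, 0, 0;
    1, 0, 0, 0, 0;
    0, 0, 0, 0, 0;
    0, 0, 0, 0, 0;
    0, 0, 0, 0, 0;
    0, 0, 0, 0, 0;
    0, 0, 0, 0, 0;
    0, 0, 0, 0, 0;
    0, 0, 0, 0, 0;
    0, 0, 0, 0, 0;
    0, 0, 0, 0, 0;
    0, 1, -1, 2, 2;
    0, 0, 0, 0, 0;
    0, 0, 0, 0, 0;
    0, 0, 0, 0, 0;
    0, 0, 0, 1, 0;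
    0, 0, 0, 0, -1;
    0, 0, 1, -1, -1]

section Aux

lemma key_bil {m n k : ℕ} (A : Matrix (Fin n) (Fin m) ℤ) (B : Matrix (Fin n) (Fin k) ℤ)
    (G : Matrix (Fin n) (Fin n) ℤ) (x : Fin m → ℤ) (y : Fin k → ℤ) :
    (A.mulVec x) ⬝ᵥ G.mulVec (B.mulVec y) = x ⬝ᵥ (Aᵀ * G * B).mulVec y := by
  rw [Matrix.dotProduct_mulVec, Matrix.dotProduct_mulVec, ← Matrix.vecMul_transpose,
    Matrix.vecMul_vecMul, Matrix.vecMul_vecMul, Matrix.dotProduct_mulVec, Matrix.mul_assoc]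

set_option maxRecDepth 1000000 in
set_option maxHeartbeats 4000000 in
lemma chkA : matAᵀ * gramK3 * matA = gramS := by decide

set_option maxRecDepth 1000000 in
set_option maxHeartbeats 4000000 in
lemma chkB : matBᵀ * gramK3 * matB = gramT := by decide

set_option maxRecDepth 1000000 in
set_option maxHeartbeats 4000000 in
lemma chkBA : matBᵀ * gramK3 * matA = 0 := by decide

set_option maxRecDepth 1000000 in
set_option maxHeartbeats 4000000 in
lemma chkL : matL * matA = 1 := by decide

set_option maxRecDepth 1000000 in
set_option maxHeartbeats 4000000 in
lemma chkM : matM * matB = 1 := by decide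

set_option maxRecDepth 1000000 in
set_option maxHeartbeats 4000000 in
lemma chkProj : matB * matM + matN * (matAᵀ * gramK3) = 1 := by decide

set_option maxRecDepth 1000000 in
set_option maxHeartbeats 4000000 in
lemma chkGsymm : gramK3ᵀ = gramK3 := by decide

end Aux

/-- There is a primitive isometric embedding of `S = A₁(-1) ⊕ A₁⁴` into the K3 lattice,
whose orthogonal complement is isometric to `T = U ⊕ U ⊕ E₈ ⊕ A₁⁵`. -/
theorem S_embeds_primitively_in_K3_with_complement_T :
    ∃ φ : (Fin 5 → ℤ) →ₗ[ℤ] (Fin 22 → ℤ),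
      Function.Injective φ ∧
      (∀ x y : Fin 5 → ℤ, (φ x) ⬝ᵥ gramK3.mulVec (φ y) = x ⬝ᵥ gramS.mulVec y) ∧
      (∀ (x : Fin 22 → ℤ) (c : ℤ), c ≠ 0 → c • x ∈ Set.range φ → x ∈ Set.range φ) ∧
      ∃ ψ : (Fin 17 → ℤ) →ₗ[ℤ] (Fin 22 → ℤ),
        Function.Injective ψ ∧
        Set.range ψ = {x : Fin 22 → ℤ | ∀ z : Fin 5 → ℤ, x ⬝ᵥ gramK3.mulVec (φ z) = 0} ∧
        ∀ x y : Fin 17 → ℤ, (ψ x) ⬝ᵥ gramK3.mulVec (ψ y) = x ⬝ᵥ gramT.mulVec y := by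
  refine ⟨Matrix.mulVecLin matA, ?_, ?_, ?_, Matrix.mulVecLin matB, ?_, ?_, ?_⟩
  · intro x y h
    have := congrArg (matL.mulVec) h
    simpa [Matrix.mulVec_mulVec, chkL] using this
  · intro x y
    rw [Matrix.mulVecLin_apply, Matrix.mulVecLin_apply, key_bil, chkA]
  · rintro x c hc ⟨y, hy⟩
    refine ⟨matL.mulVec x, ?_⟩
    have h1 : matA.mulVec (matL.mulVec (c • x)) = c • x := by
      rw [← hy, Matrix.mulVecLin_apply, Matrix.mulVec_mulVec, Matrix.mulVec_mulVec,
        Matrix.mul_assoc, chkL, Matrix.mul_one]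
    rw [Matrix.mulVec_smul, Matrix.mulVec_smul] at h1
    exact smul_right_injective (Fin 22 → ℤ) hc h1
  · intro x y h
    have := congrArg (matM.mulVec) h
    simpa [Matrix.mulVec_mulVec, chkM] using this
  · ext x
    constructor
    · rintro ⟨u, rfl⟩ z
      rw [Matrix.mulVecLin_apply, Matrix.mulVecLin_apply, key_bil, chkBA]
      simp
    · intro hx
      have hw : (matAᵀ * gramK3).mulVec x = 0 := by
        funext j
        have h := hx (Pi.single j 1)
        rw [Matrix.mulVecLin_apply, Matrix.mulVec_mulVec, Matrix.dotProduct_mulVec,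
          ← Matrix.mulVec_transpose, Matrix.transpose_mul, chkGsymm] at h
        simpa [dotProduct_single] using h
      refine ⟨matM.mulVec x, ?_⟩
      have h1 := congrArg (fun Mm : Matrix (Fin 22) (Fin 22) ℤ => Mm.mulVec x) chkProj
      simp only [Matrix.add_mulVec, Matrix.one_mulVec] at h1
      have h2 : (matN * (matAᵀ * gramK3)).mulVec x = 0 := by
        rw [← Matrix.mulVec_mulVec, hw, Matrix.mulVec_zero]
      rw [h2, add_zero] at h1
      rw [Matrix.mulVecLin_apply, Matrix.mulVec_mulVec]
      exact h1
  · intro x y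
    rw [Matrix.mulVecLin_apply, Matrix.mulVecLin_apply, key_bil, chkB]
end

section
/- There exists a primitive isometric embedding of E_8⊕A_1^5 into E_8⊕E_8⊕E_8 whose orthogonal complement (with the restricted form) is isometric to E_7⊕A_1^4, and there exists a primitive isometric embedding of E_8⊕A_1⊕D_4 into E_8⊕E_8⊕E_8 whose orthogonal complement is isometric to E_7⊕D_4. -/
open Matrix

/-- Gram matrix of `E₈ ⊕ E₈ ⊕ E₈`. -/
def gramE8x3 : Matrix (Fin 24) (Fin 24) ℤ := blockSum gramE8 (blockSum gramE8 gramE8)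

/-- Gram matrix of `E₈ ⊕ A₁⁵`. -/
def gramE8A15 : Matrix (Fin 13) (Fin 13) ℤ :=
  blockSum gramE8 (Matrix.diagonal fun _ : Fin 5 => (-2 : ℤ))

/-- Gram matrix of `E₈ ⊕ A₁ ⊕ D₄`. -/
def gramE8A1D4 : Matrix (Fin 13) (Fin 13) ℤ := blockSum gramE8 (blockSum gramA1 gramD4)

/-- Gram matrix of `E₇ ⊕ A₁⁴`. -/
def gramE7A14 : Matrix (Fin 11) (Fin 11) ℤ :=
  blockSum gramE7 (Matrix.diagonal fun _ : Fin 4 => (-2 : ℤ))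

/-- Gram matrix of `E₇ ⊕ D₄`. -/
def gramE7D4 : Matrix (Fin 11) (Fin 11) ℤ := blockSum gramE7 gramD4

/-- There is a primitive isometric embedding (an injective linear map preserving the
forms, with torsion-free cokernel) of `L₁` into `L₂` whose orthogonal complement with
the restricted form is isometric to `L₃`. -/
def HasPrimEmbeddingWithComplement {a b c : ℕ} (G₁ : Matrix (Fin a) (Fin a) ℤ)
    (G₂ : Matrix (Fin b) (Fin b) ℤ) (G₃ : Matrix (Fin c) (Fin c) ℤ) : Prop :=
  ∃ φ : (Fin a → ℤ) →ₗ[ℤ] (Fin b → ℤ),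
    Function.Injective φ ∧
    (∀ x y : Fin a → ℤ, (φ x) ⬝ᵥ G₂.mulVec (φ y) = x ⬝ᵥ G₁.mulVec y) ∧
    (∀ (x : Fin b → ℤ) (t : ℤ), t ≠ 0 → t • x ∈ Set.range φ → x ∈ Set.range φ) ∧
    ∃ ψ : (Fin c → ℤ) →ₗ[ℤ] (Fin b → ℤ),
      Function.Injective ψ ∧
      Set.range ψ = {x : Fin b → ℤ | ∀ z : Fin a → ℤ, x ⬝ᵥ G₂.mulVec (φ z) = 0} ∧
      ∀ x y : Fin c → ℤ, (ψ x) ⬝ᵥ G₂.mulVec (ψ y) = x ⬝ᵥ G₃.mulVec y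

def matA1 : Matrix (Fin 24) (Fin 13) ℤ :=
  !![1, 0, 0, 0, 0, 0, 0, 0, 0, 0, 0, 0, 0;
    0, 1, 0, 0, 0, 0, 0, 0, 0, 0, 0, 0, 0;
    0, 0, 1, 0, 0, 0, 0, 0, 0, 0, 0, 0, 0;
    0, 0, 0, 1, 0, 0, 0, 0, 0, 0, 0, 0, 0;
    0, 0, 0, 0, 1, 0, 0, 0, 0, 0, 0, 0, 0;
    0, 0, 0, 0, 0, 1, 0, 0, 0, 0, 0, 0, 0;
    0, 0, 0, 0, 0, 0, 1, 0, 0, 0, 0, 0, 0;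
    0, 0, 0, 0, 0, 0, 0, 1, 0, 0, 0, 0, 0;
    0, 0, 0, 0, 0, 0, 0, 0, 0, 0, 0, 0, 0;
    0, 0, 0, 0, 0, 0, 0, 0, 0, 0, 0, 0, 0;
    0, 0, 0, 0, 0, 0, 0, 0, 1, 0, 0, 0, 0;
    0, 0, 0, 0, 0, 0, 0, 0, 0, 0, 0, 0, 0;
    0, 0, 0, 0, 0, 0, 0, 0, 0, 0, 0, 0, 0;
    0, 0, 0, 0, 0, 0, 0, 0, 0, 0, 0, 0, 0;
    0, 0, 0, 0, 0, 0, 0, 0, 0, 0, 0, 0, 0;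
    0, 0, 0, 0, 0, 0, 0, 0, 0, 0, 0, 0, 0;
    0, 0, 0, 0, 0, 0, 0, 0, 0, 1, 0, 0, 0;
    0, 0, 0, 0, 0, 0, 0, 0, 0, 0, 0, 0, 0;
    0, 0, 0, 0, 0, 0, 0, 0, 0, 0, 1, -1, 0;
    0, 0, 0, 0, 0, 0, 0, 0, 0, 0, 0, -1, 0;
    0, 0, 0, 0, 0, 0, 0, 0, 0, 0, 0, -1, -1;
    0, 0, 0, 0, 0, 0, 0, 0, 0, 0, 0, 0, -1;
    0, 0, 0, 0, 0, 0, 0, 0, 0, 0, 0, 0, 0;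
    0, 0, 0, 0, 0, 0, 0, 0, 0, 0, 0, -1, 0]

def matK1 : Matrix (Fin 13) (Fin 24) ℤ :=
  !![1, 0, 0, 0, 0, 0, 0, 0, 0, 0, 0, 0, 0, 0, 0, 0, 0, 0, 0, 0, 0, 0, 0, 0;
    0, 1, 0, 0, 0, 0, 0, 0, 0, 0, 0, 0, 0, 0, 0, 0, 0, 0, 0, 0, 0, 0, 0, 0;
    0, 0, 1, 0, 0, 0, 0, 0, 0, 0, 0, 0, 0, 0, 0, 0, 0, 0, 0, 0, 0, 0, 0, 0;
    0, 0, 0, 1, 0, 0, 0, 0, 0, 0, 0, 0, 0, 0, 0, 0, 0, 0, 0, 0, 0, 0, 0, 0;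
    0, 0, 0, 0, 1, 0, 0, 0, 0, 0, 0, 0, 0, 0, 0, 0, 0, 0, 0, 0, 0, 0, 0, 0;
    0, 0, 0, 0, 0, 1, 0, 0, 0, 0, 0, 0, 0, 0, 0, 0, 0, 0, 0, 0, 0, 0, 0, 0;
    0, 0, 0, 0, 0, 0, 1, 0, 0, 0, 0, 0, 0, 0, 0, 0, 0, 0, 0, 0, 0, 0, 0, 0;
    0, 0, 0, 0, 0, 0, 0, 1, 0, 0, 0, 0, 0, 0, 0, 0, 0, 0, 0, 0, 0, 0, 0, 0;
    0, 0, 0, 0, 0, 0, 0, 0, 0, 0, 1, 0, 0, 0, 0, 0, 0, 0, 0, 0, 0, 0, 0, 0;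
    0, 0, 0, 0, 0, 0, 0, 0, 0, 0, 0, 0, 0, 0, 0, 0, 1, 0, 0, 0, 0, 0, 0, 0;
    0, 0, 0, 0, 0, 0, 0, 0, 0, 0, 0, 0, 0, 0, 0, 0, 0, 0, 1, 0, 0, 0, 0, -1;
    0, 0, 0, 0, 0, 0, 0, 0, 0, 0, 0, 0, 0, 0, 0, 0, 0, 0, 0, 0, 0, 0, 0, -1;
    0, 0, 0, 0, 0, 0, 0, 0, 0, 0, 0, 0, 0, 0, 0, 0, 0, 0, 0, 0, -1, 0, 0, 1]

def matB1 : Matrix (Fin 24) (Fin 11) ℤ :=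
  !![0, 0, 0, 0, 0, 0, 0, 0, 0, 0, 0;
    0, 0, 0, 0, 0, 0, 0, 0, 0, 0, 0;
    0, 0, 0, 0, 0, 0, 0, 0, 0, 0, 0;
    0, 0, 0, 0, 0, 0, 0, 0, 0, 0, 0;
    0, 0, 0, 0, 0, 0, 0, 0, 0, 0, 0;
    0, 0, 0, 0, 0, 0, 0, 0, 0, 0, 0;
    0, 0, 0, 0, 0, 0, 0, 0, 0, 0, 0;
    0, 0, 0, 0, 0, 0, 0, 0, 0, 0, 0;
    1, 0, 0, 0, 1, 0, -2, 0, 0, 0, 0;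
    0, 1, 0, 0, 2, 0, -4, 0, 0, 0, 0;
    0, 1, 1, -1, 3, 0, -6, 0, 0, 0, 0;
    0, 1, 1, -1, 2, 0, -5, 0, 0, 0, 0;
    0, 0, 1, 0, 1, 0, -4, 0, 0, 0, 0;
    0, 0, 0, 0, 1, 0, -2, 0, 0, 0, 0;
    0, 0, 0, 0, 0, 1, -1, 0, 0, 0, 0;
    0, 0, 1, -1, 2, 0, -3, 0, 0, 0, 0;
    0, 0, 0, 0, 0, 0, 0, 1, 1, -2, 1;
    0, 0, 0, 0, 0, 0, 0, 2, 2, -4, 2;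
    0, 0, 0, 0, 0, 0, 0, 2, 3, -6, 3;
    0, 0, 0, 0, 0, 0, 0, 1, 2, -5, 3;
    0, 0, 0, 0, 0, 0, 0, 1, 1, -4, 2;
    0, 0, 0, 0, 0, 0, 0, 0, 1, -3, 1;
    0, 0, 0, 0, 0, 0, 0, 0, 0, -2, 0;
    0, 0, 0, 0, 0, 0, 0, 1, 2, -3, 1]

def matKp1 : Matrix (Fin 11) (Fin 24) ℤ :=
  !![0, 0, 0, 0, 0, 0, 0, 0, 1, 0, 0, 0, 0, -1, 0, 0, 0, 0, 0, 0, 0, 0, 0, 0;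
    0, 0, 0, 0, 0, 0, 0, 0, 0, 2, -2, 1, 0, -2, 0, 1, 0, 0, 0, 0, 0, 0, 0, 0;
    0, 0, 0, 0, 0, 0, 0, 0, 0, 2, -2, 0, 1, -3, 0, 2, 0, 0, 0, 0, 0, 0, 0, 0;
    0, 0, 0, 0, 0, 0, 0, 0, 0, 3, -3, 0, 1, -2, 0, 2, 0, 0, 0, 0, 0, 0, 0, 0;
    0, 0, 0, 0, 0, 0, 0, 0, 0, 2, -2, 0, 0, -1, 0, 2, 0, 0, 0, 0, 0, 0, 0, 0;
    0, 0, 0, 0, 0, 0, 0, 0, 0, 1, -1, 0, 0, -1, 1, 1, 0, 0, 0, 0, 0, 0, 0, 0;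
    0, 0, 0, 0, 0, 0, 0, 0, 0, 1, -1, 0, 0, -1, 0, 1, 0, 0, 0, 0, 0, 0, 0, 0;
    0, 0, 0, 0, 0, 0, 0, 0, 0, 0, 0, 0, 0, 0, 0, 0, -19, 0, 11, -11, 10, 0, -5, -1;
    0, 0, 0, 0, 0, 0, 0, 0, 0, 0, 0, 0, 0, 0, 0, 0, 5, 0, -3, 3, -3, 0, 1, 1;
    0, 0, 0, 0, 0, 0, 0, 0, 0, 0, 0, 0, 0, 0, 0, 0, -2, 0, 1, -1, 1, 0, -1, 0;
    0, 0, 0, 0, 0, 0, 0, 0, 0, 0, 0, 0, 0, 0, 0, 0, 3, 0, -2, 2, -1, 0, 0, 0]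

def matD1 : Matrix (Fin 24) (Fin 13) ℤ :=
  !![-4, -7, -10, -8, -6, -4, -2, -5, 0, 0, 0, 0, 0;
    -7, -14, -20, -16, -12, -8, -4, -10, 0, 0, 0, 0, 0;
    -10, -20, -30, -24, -18, -12, -6, -15, 0, 0, 0, 0, 0;
    -8, -16, -24, -20, -15, -10, -5, -12, 0, 0, 0, 0, 0;
    -6, -12, -18, -15, -12, -8, -4, -9, 0, 0, 0, 0, 0;
    -4, -8, -12, -10, -8, -6, -3, -6, 0, 0, 0, 0, 0;
    -2, -4, -6, -5, -4, -3, -2, -3, 0, 0, 0, 0, 0;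
    -5, -10, -15, -12, -9, -6, -3, -8, 0, 0, 0, 0, 0;
    0, 0, 0, 0, 0, 0, 0, 0, 0, 0, 0, 0, 0;
    0, 0, 0, 0, 0, 0, 0, 0, -1, 0, 0, 0, 0;
    0, 0, 0, 0, 0, 0, 0, 0, -1, 0, 0, 0, 0;
    0, 0, 0, 0, 0, 0, 0, 0, 0, 0, 0, 0, 0;
    0, 0, 0, 0, 0, 0, 0, 0, 0, 0, 0, 0, 0;
    0, 0, 0, 0, 0, 0, 0, 0, 0, 0, 0, 0, 0;
    0, 0, 0, 0, 0, 0, 0, 0, 0, 0, 0, 0, 0;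
    0, 0, 0, 0, 0, 0, 0, 0, 0, 0, 0, 0, 0;
    0, 0, 0, 0, 0, 0, 0, 0, 0, -4, 2, -2, -2;
    0, 0, 0, 0, 0, 0, 0, 0, 0, -7, 4, -4, -4;
    0, 0, 0, 0, 0, 0, 0, 0, 0, -1, 0, -1, -1;
    0, 0, 0, 0, 0, 0, 0, 0, 0, 5, -3, 2, 2;
    0, 0, 0, 0, 0, 0, 0, 0, 0, 0, 0, 0, 0;
    0, 0, 0, 0, 0, 0, 0, 0, 0, 7, -4, 3, 4;
    0, 0, 0, 0, 0, 0, 0, 0, 0, 2, -1, 1, 1;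
    0, 0, 0, 0, 0, 0, 0, 0, 0, 0, 0, 0, 0]

def matA2 : Matrix (Fin 24) (Fin 13) ℤ :=
  !![1, 0, 0, 0, 0, 0, 0, 0, 0, 0, 0, 0, 0;
    0, 1, 0, 0, 0, 0, 0, 0, 0, 0, 0, 0, 0;
    0, 0, 1, 0, 0, 0, 0, 0, 0, 0, 0, 0, 0;
    0, 0, 0, 1, 0, 0, 0, 0, 0, 0, 0, 0, 0;
    0, 0, 0, 0, 1, 0, 0, 0, 0, 0, 0, 0, 0;
    0, 0, 0, 0, 0, 1, 0, 0, 0, 0, 0, 0, 0;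
    0, 0, 0, 0, 0, 0, 1, 0, 0, 0, 0, 0, 0;
    0, 0, 0, 0, 0, 0, 0, 1, 0, 0, 0, 0, 0;
    0, 0, 0, 0, 0, 0, 0, 0, 0, 0, 0, 0, 0;
    0, 0, 0, 0, 0, 0, 0, 0, 0, 0, 0, 0, 0;
    0, 0, 0, 0, 0, 0, 0, 0, 1, 0, 0, 0, 0;
    0, 0, 0, 0, 0, 0, 0, 0, 0, 0, 0, 0, 0;
    0, 0, 0, 0, 0, 0, 0, 0, 0, 0, 0, 0, 0;
    0, 0, 0, 0, 0, 0, 0, 0, 0, 0, 0, 0, 0;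
    0, 0, 0, 0, 0, 0, 0, 0, 0, 0, 0, 0, 0;
    0, 0, 0, 0, 0, 0, 0, 0, 0, 0, 0, 0, 0;
    0, 0, 0, 0, 0, 0, 0, 0, 0, 0, 0, 1, 0;
    0, 0, 0, 0, 0, 0, 0, 0, 0, 0, -1, 2, 0;
    0, 0, 0, 0, 0, 0, 0, 0, 0, 1, -1, 2, -1;
    0, 0, 0, 0, 0, 0, 0, 0, 0, 0, 0, 1, -1;
    0, 0, 0, 0, 0, 0, 0, 0, 0, 0, 0, 1, -1;
    0, 0, 0, 0, 0, 0, 0, 0, 0, 0, 0, 0, 0;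
    0, 0, 0, 0, 0, 0, 0, 0, 0, 0, 0, 0, 0;
    0, 0, 0, 0, 0, 0, 0, 0, 0, 0, 0, 1, -1]

def matK2 : Matrix (Fin 13) (Fin 24) ℤ :=
  !![1, 0, 0, 0, 0, 0, 0, 0, 0, 0, 0, 0, 0, 0, 0, 0, 0, 0, 0, 0, 0, 0, 0, 0;
    0, 1, 0, 0, 0, 0, 0, 0, 0, 0, 0, 0, 0, 0, 0, 0, 0, 0, 0, 0, 0, 0, 0, 0;
    0, 0, 1, 0, 0, 0, 0, 0, 0, 0, 0, 0, 0, 0, 0, 0, 0, 0, 0, 0, 0, 0, 0, 0;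
    0, 0, 0, 1, 0, 0, 0, 0, 0, 0, 0, 0, 0, 0, 0, 0, 0, 0, 0, 0, 0, 0, 0, 0;
    0, 0, 0, 0, 1, 0, 0, 0, 0, 0, 0, 0, 0, 0, 0, 0, 0, 0, 0, 0, 0, 0, 0, 0;
    0, 0, 0, 0, 0, 1, 0, 0, 0, 0, 0, 0, 0, 0, 0, 0, 0, 0, 0, 0, 0, 0, 0, 0;
    0, 0, 0, 0, 0, 0, 1, 0, 0, 0, 0, 0, 0, 0, 0, 0, 0, 0, 0, 0, 0, 0, 0, 0;
    0, 0, 0, 0, 0, 0, 0, 1, 0, 0, 0, 0, 0, 0, 0, 0, 0, 0, 0, 0, 0, 0, 0, 0;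
    0, 0, 0, 0, 0, 0, 0, 0, 0, 0, 1, 0, 0, 0, 0, 0, 0, 0, 0, 0, 0, 0, 0, 0;
    0, 0, 0, 0, 0, 0, 0, 0, 0, 0, 0, 0, 0, 0, 0, 0, 1, -1, 1, -1, 0, 0, 0, 0;
    0, 0, 0, 0, 0, 0, 0, 0, 0, 0, 0, 0, 0, 0, 0, 0, 2, -1, 0, -2, 0, 0, 0, 2;
    0, 0, 0, 0, 0, 0, 0, 0, 0, 0, 0, 0, 0, 0, 0, 0, 1, 0, 0, -1, 0, 0, 0, 1;
    0, 0, 0, 0, 0, 0, 0, 0, 0, 0, 0, 0, 0, 0, 0, 0, 1, 0, 0, -1, 0, 0, 0, 0]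

def matB2 : Matrix (Fin 24) (Fin 11) ℤ :=
  !![0, 0, 0, 0, 0, 0, 0, 0, 0, 0, 0;
    0, 0, 0, 0, 0, 0, 0, 0, 0, 0, 0;
    0, 0, 0, 0, 0, 0, 0, 0, 0, 0, 0;
    0, 0, 0, 0, 0, 0, 0, 0, 0, 0, 0;
    0, 0, 0, 0, 0, 0, 0, 0, 0, 0, 0;
    0, 0, 0, 0, 0, 0, 0, 0, 0, 0, 0;
    0, 0, 0, 0, 0, 0, 0, 0, 0, 0, 0;
    0, 0, 0, 0, 0, 0, 0, 0, 0, 0, 0;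
    1, 0, 0, 0, 1, 0, -2, 0, 0, 0, 0;
    0, 1, 0, 0, 2, 0, -4, 0, 0, 0, 0;
    0, 1, 1, -1, 3, 0, -6, 0, 0, 0, 0;
    0, 1, 1, -1, 2, 0, -5, 0, 0, 0, 0;
    0, 0, 1, 0, 1, 0, -4, 0, 0, 0, 0;
    0, 0, 0, 0, 1, 0, -2, 0, 0, 0, 0;
    0, 0, 0, 0, 0, 1, -1, 0, 0, 0, 0;
    0, 0, 1, -1, 2, 0, -3, 0, 0, 0, 0;
    0, 0, 0, 0, 0, 0, 0, 1, 0, -2, 1;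
    0, 0, 0, 0, 0, 0, 0, 2, 0, -4, 2;
    0, 0, 0, 0, 0, 0, 0, 3, 0, -6, 3;
    0, 0, 0, 0, 0, 0, 0, 2, 0, -5, 3;
    0, 0, 0, 0, 0, 0, 0, 1, 0, -4, 2;
    0, 0, 0, 0, 0, 0, 0, 1, 0, -3, 1;
    0, 0, 0, 0, 0, 0, 0, 0, 1, -2, 0;
    0, 0, 0, 0, 0, 0, 0, 2, 0, -3, 1]

def matKp2 : Matrix (Fin 11) (Fin 24) ℤ :=
  !![0, 0, 0, 0, 0, 0, 0, 0, 1, 0, 0, 0, 0, -1, 0, 0, 0, 0, 0, 0, 0, 0, 0, 0;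
    0, 0, 0, 0, 0, 0, 0, 0, 0, 2, -2, 1, 0, -2, 0, 1, 0, 0, 0, 0, 0, 0, 0, 0;
    0, 0, 0, 0, 0, 0, 0, 0, 0, 2, -2, 0, 1, -3, 0, 2, 0, 0, 0, 0, 0, 0, 0, 0;
    0, 0, 0, 0, 0, 0, 0, 0, 0, 3, -3, 0, 1, -2, 0, 2, 0, 0, 0, 0, 0, 0, 0, 0;
    0, 0, 0, 0, 0, 0, 0, 0, 0, 2, -2, 0, 0, -1, 0, 2, 0, 0, 0, 0, 0, 0, 0, 0;
    0, 0, 0, 0, 0, 0, 0, 0, 0, 1, -1, 0, 0, -1, 1, 1, 0, 0, 0, 0, 0, 0, 0, 0;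
    0, 0, 0, 0, 0, 0, 0, 0, 0, 1, -1, 0, 0, -1, 0, 1, 0, 0, 0, 0, 0, 0, 0, 0;
    0, 0, 0, 0, 0, 0, 0, 0, 0, 0, 0, 0, 0, 0, 0, 0, -2, 0, 0, 2, -3, 2, 0, 0;
    0, 0, 0, 0, 0, 0, 0, 0, 0, 0, 0, 0, 0, 0, 0, 0, -2, 0, 0, 2, -2, 0, 1, 0;
    0, 0, 0, 0, 0, 0, 0, 0, 0, 0, 0, 0, 0, 0, 0, 0, -1, 0, 0, 1, -1, 0, 0, 0;
    0, 0, 0, 0, 0, 0, 0, 0, 0, 0, 0, 0, 0, 0, 0, 0, -1, 0, 0, 1, 0, -1, 0, 0]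

def matD2 : Matrix (Fin 24) (Fin 13) ℤ :=
  !![-4, -7, -10, -8, -6, -4, -2, -5, 0, 0, 0, 0, 0;
    -7, -14, -20, -16, -12, -8, -4, -10, 0, 0, 0, 0, 0;
    -10, -20, -30, -24, -18, -12, -6, -15, 0, 0, 0, 0, 0;
    -8, -16, -24, -20, -15, -10, -5, -12, 0, 0, 0, 0, 0;
    -6, -12, -18, -15, -12, -8, -4, -9, 0, 0, 0, 0, 0;
    -4, -8, -12, -10, -8, -6, -3, -6, 0, 0, 0, 0, 0;
    -2, -4, -6, -5, -4, -3, -2, -3, 0, 0, 0, 0, 0;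
    -5, -10, -15, -12, -9, -6, -3, -8, 0, 0, 0, 0, 0;
    0, 0, 0, 0, 0, 0, 0, 0, 0, 0, 0, 0, 0;
    0, 0, 0, 0, 0, 0, 0, 0, -1, 0, 0, 0, 0;
    0, 0, 0, 0, 0, 0, 0, 0, -1, 0, 0, 0, 0;
    0, 0, 0, 0, 0, 0, 0, 0, 0, 0, 0, 0, 0;
    0, 0, 0, 0, 0, 0, 0, 0, 0, 0, 0, 0, 0;
    0, 0, 0, 0, 0, 0, 0, 0, 0, 0, 0, 0, 0;
    0, 0, 0, 0, 0, 0, 0, 0, 0, 0, 0, 0, 0;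
    0, 0, 0, 0, 0, 0, 0, 0, 0, 0, 0, 0, 0;
    0, 0, 0, 0, 0, 0, 0, 0, 0, -1, -2, -2, -1;
    0, 0, 0, 0, 0, 0, 0, 0, 0, -1, -2, -3, -1;
    0, 0, 0, 0, 0, 0, 0, 0, 0, -2, -3, -4, -1;
    0, 0, 0, 0, 0, 0, 0, 0, 0, -1, -2, -2, -1;
    0, 0, 0, 0, 0, 0, 0, 0, 0, 0, 0, 0, 0;
    0, 0, 0, 0, 0, 0, 0, 0, 0, 0, 0, 0, 0;
    0, 0, 0, 0, 0, 0, 0, 0, 0, 0, 0, 0, 0;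
    0, 0, 0, 0, 0, 0, 0, 0, 0, -1, -2, -3, 0]

lemma dot_aux {a b c : ℕ} (M : Matrix (Fin b) (Fin b) ℤ) (A : Matrix (Fin b) (Fin a) ℤ)
    (B : Matrix (Fin b) (Fin c) ℤ) (x : Fin a → ℤ) (y : Fin c → ℤ) :
    (A.mulVec x) ⬝ᵥ M.mulVec (B.mulVec y) = x ⬝ᵥ (Aᵀ * M * B).mulVec y := by
  rw [Matrix.mulVec_mulVec, Matrix.dotProduct_mulVec, ← Matrix.vecMul_transpose,
    Matrix.vecMul_vecMul, Matrix.dotProduct_mulVec, Matrix.mul_assoc]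

lemma hasPrim_of_matrices {a b c : ℕ} {G₁ : Matrix (Fin a) (Fin a) ℤ}
    {G₂ : Matrix (Fin b) (Fin b) ℤ} {G₃ : Matrix (Fin c) (Fin c) ℤ}
    (A : Matrix (Fin b) (Fin a) ℤ) (K : Matrix (Fin a) (Fin b) ℤ)
    (B : Matrix (Fin b) (Fin c) ℤ) (K' : Matrix (Fin c) (Fin b) ℤ)
    (D : Matrix (Fin b) (Fin a) ℤ)
    (h1 : Aᵀ * G₂ * A = G₁) (h2 : K * A = 1)
    (h3 : Bᵀ * G₂ * B = G₃) (h4 : Bᵀ * G₂ * A = 0)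
    (h5 : K' * B = 1) (h6 : B * K' + D * (G₂ * A)ᵀ = 1) :
    HasPrimEmbeddingWithComplement G₁ G₂ G₃ := by
  refine ⟨A.mulVecLin, ?_, ?_, ?_, B.mulVecLin, ?_, ?_, ?_⟩
  · intro x y h
    have h' := congrArg K.mulVec h
    simpa [Matrix.mulVec_mulVec, h2, Matrix.one_mulVec] using h'
  · intro x y
    simp only [Matrix.mulVecLin_apply]
    rw [dot_aux, h1]
  · rintro x t ht ⟨u, hu⟩
    refine ⟨K.mulVec x, ?_⟩
    have key : A.mulVec (K.mulVec (t • x)) = t • x := by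
      rw [← hu]
      simp only [Matrix.mulVecLin_apply, Matrix.mulVec_mulVec, Matrix.mul_assoc, h2, Matrix.mul_one]
    rw [Matrix.mulVec_smul, Matrix.mulVec_smul] at key
    exact smul_right_injective (Fin b → ℤ) ht key
  · intro x y h
    have h' := congrArg K'.mulVec h
    simpa [Matrix.mulVec_mulVec, h5, Matrix.one_mulVec] using h'
  · ext x
    simp only [Set.mem_range, Set.mem_setOf_eq, Matrix.mulVecLin_apply]
    constructor
    · rintro ⟨u, rfl⟩ z
      rw [dot_aux, h4, Matrix.zero_mulVec, dotProduct_zero]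
    · intro h
      have hC : (G₂ * A)ᵀ.mulVec x = 0 := by
        funext j
        have := h (Pi.single j 1)
        rw [Matrix.mulVec_mulVec, Matrix.dotProduct_mulVec] at this
        simp only [Matrix.mulVec_transpose]
        simpa using this
      refine ⟨K'.mulVec x, ?_⟩
      have : (B * K' + D * (G₂ * A)ᵀ).mulVec x = x := by rw [h6, Matrix.one_mulVec]
      rw [Matrix.add_mulVec, ← Matrix.mulVec_mulVec, ← Matrix.mulVec_mulVec, hC,
        Matrix.mulVec_zero, add_zero] at this
      exact this
  · intro x y
    simp only [Matrix.mulVecLin_apply]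
    rw [dot_aux, h3]

set_option maxHeartbeats 4000000 in
/-- `E₈ ⊕ A₁⁵` embeds primitively into `E₈³` with orthogonal complement `E₇ ⊕ A₁⁴`, and
`E₈ ⊕ A₁ ⊕ D₄` embeds primitively into `E₈³` with orthogonal complement `E₇ ⊕ D₄`. -/
theorem primitive_embeddings_into_E8x3 :
    HasPrimEmbeddingWithComplement gramE8A15 gramE8x3 gramE7A14 ∧
    HasPrimEmbeddingWithComplement gramE8A1D4 gramE8x3 gramE7D4 := by
  constructor
  · exact hasPrim_of_matrices matA1 matK1 matB1 matKp1 matD1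
      (by decide) (by decide) (by decide) (by decide) (by decide) (by decide)
  · exact hasPrim_of_matrices matA2 matK2 matB2 matKp2 matD2
      (by decide) (by decide) (by decide) (by decide) (by decide) (by decide)
end

section
/- The lattice T = U⊕U⊕E_8⊕A_1^5 is isometric to U⊕U⊕E_7⊕D_4⊕A_1⊕A_1 and also isometric to U⊕U⊕D_6⊕D_6⊕A_1: there exist P, Q ∈ GL(17,ℤ) carrying the block-diagonal Gram matrix of U⊕U⊕E_8⊕A_1^5 to those of U⊕U⊕E_7⊕D_4⊕A_1^2 and of U⊕U⊕D_6^2⊕A_1 respectively. -/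
open Matrix

/-- Gram matrix of `U ⊕ U ⊕ E₇ ⊕ D₄ ⊕ A₁ ⊕ A₁`. -/
def gramT₁ : Matrix (Fin 17) (Fin 17) ℤ :=
  blockSum gramU (blockSum gramU (blockSum gramE7 (blockSum gramD4
    (Matrix.diagonal fun _ : Fin 2 => (-2 : ℤ)))))

/-- Gram matrix of `U ⊕ U ⊕ D₆ ⊕ D₆ ⊕ A₁`. -/
def gramT₂ : Matrix (Fin 17) (Fin 17) ℤ :=
  blockSum gramU (blockSum gramU (blockSum gramD6 (blockSum gramD6 gramA1)))

def matP : Matrix (Fin 17) (Fin 17) ℤ :=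
  !![1, 0, 0, 0, 0, 0, 0, 0, 0, 0, 0, 0, 0, 0, 0, 0, 0;
    0, 1, 0, 0, 0, 0, 0, 0, 0, 0, 0, 0, 0, 0, 0, 0, 0;
    0, 0, 2, 8, 0, -2, 0, 0, 0, 0, 2, -1, -2, -1, -1, 0, 0;
    0, 0, 4, 16, 1, -5, 1, -1, 1, -1, 4, 0, -5, -2, -2, 0, 0;
    0, 0, 0, 0, 0, -1, 2, 0, -2, 1, -1, 0, 0, 0, 0, 0, 0;
    0, 0, -1, -4, 0, 0, 3, 0, -4, 3, -3, 1, 0, 1, 1, 0, 0;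
    0, 0, -1, -4, 1, -1, 4, 0, -6, 5, -3, 1, 0, 1, 1, 0, 0;
    0, 0, 1, 4, 1, -3, 4, -1, -4, 4, -1, 0, -2, 0, 0, 0, 0;
    0, 0, 0, -1, 1, -1, 3, -1, -3, 3, -2, 0, 0, 0, 0, 0, 0;
    0, 0, 0, 0, 1, -1, 2, -1, -2, 2, -1, 0, 0, 0, 0, 0, 0;
    0, 0, 0, 0, 1, -1, 1, 0, -1, 1, -1, 0, 0, 0, 0, 0, 0;
    0, 0, 1, 4, 1, -2, 2, 0, -3, 2, 0, 0, -2, 0, 0, 0, 0;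
    0, 0, 0, 0, 0, 0, 0, 0, 0, 0, 0, 0, 0, 0, 0, 0, -1;
    0, 0, -1, -3, 0, 1, 0, 0, 0, 0, -1, 0, 1, 1, 0, 0, 0;
    0, 0, 1, 5, 0, -1, 0, 0, 0, 0, 1, 0, -1, -1, -1, 0, 0;
    0, 0, -1, -3, 0, 1, 0, 0, 0, 0, -1, 0, 1, 0, 1, 0, 0;
    0, 0, 0, 0, 0, 0, 0, 0, 0, 0, 0, 0, 0, 0, 0, 1, 0]

def matPinv : Matrix (Fin 17) (Fin 17) ℤ :=
  !![1, 0, 0, 0, 0, 0, 0, 0, 0, 0, 0, 0, 0, 0, 0, 0, 0;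
    0, 1, 0, 0, 0, 0, 0, 0, 0, 0, 0, 0, 0, 0, 0, 0, 0;
    0, 0, 16, 8, -4, 4, 12, -13, 6, -1, 0, -12, 0, 6, -10, 6, 0;
    0, 0, 4, 2, -1, 1, 3, -3, 1, 0, 0, -3, 0, 2, -2, 2, 0;
    0, 0, 3, 2, -1, 0, 3, -3, 2, -1, 0, -2, 0, 2, -2, 2, 0;
    0, 0, 7, 4, -2, 1, 6, -6, 4, -2, -1, -5, 0, 4, -4, 4, 0;
    0, 0, 6, 4, -1, 0, 6, -5, 4, -3, -1, -5, 0, 4, -4, 4, 0;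
    0, 0, 5, 3, -1, 0, 5, -4, 3, -3, 0, -4, 0, 3, -3, 3, 0;
    0, 0, 3, 2, -1, 0, 3, -2, 2, -2, 0, -3, 0, 2, -2, 2, 0;
    0, 0, 2, 1, -1, 0, 2, -1, 1, -1, 0, -2, 0, 1, -1, 1, 0;
    0, 0, 1, 1, 0, -1, 2, -1, 1, -1, -1, -1, 0, 1, -1, 1, 0;
    0, 0, 7, 4, -2, 2, 6, -6, 2, 0, 0, -6, 0, 3, -4, 3, 0;
    0, 0, 14, 7, -3, 3, 11, -11, 4, 0, 0, -11, 0, 6, -8, 6, 0;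
    0, 0, 8, 4, -2, 2, 6, -6, 2, 0, 0, -6, 0, 4, -5, 3, 0;
    0, 0, 8, 4, -2, 2, 6, -6, 2, 0, 0, -6, 0, 3, -5, 4, 0;
    0, 0, 0, 0, 0, 0, 0, 0, 0, 0, 0, 0, 0, 0, 0, 0, 1;
    0, 0, 0, 0, 0, 0, 0, 0, 0, 0, 0, 0, -1, 0, 0, 0, 0]

def matQ : Matrix (Fin 17) (Fin 17) ℤ :=
  !![20, 96, 0, 0, -20, 20, -18, 0, 22, -40, -28, 0, 27, -17, -1, -8, 18;
    142, 682, 0, 0, -139, 139, -127, 1, 156, -283, -201, 0, 193, -121, -6, -57, 130;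
    58, 282, 2, 8, -58, 58, -55, 2, 63, -116, -83, 1, 75, -46, 0, -23, 52;
    218, 1054, 4, 16, -217, 217, -202, 4, 239, -435, -309, 2, 288, -179, -5, -87, 198;
    -5, -22, 0, 0, 5, -3, 3, 0, -6, 9, 6, 0, -6, 4, 0, 2, -4;
    -50, -241, -1, -4, 50, -46, 44, -1, -56, 98, 70, -1, -65, 41, 1, 20, -44;
    -39, -190, -1, -4, 40, -34, 33, -1, -45, 76, 54, -1, -50, 32, 0, 16, -34;
    28, 135, 1, 4, -27, 32, -30, 1, 29, -57, -41, 0, 37, -22, 0, -11, 26;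
    -16, -78, 0, -1, 17, -13, 12, 0, -19, 31, 22, 0, -21, 13, 1, 6, -14;
    2, 9, 0, 0, -1, 4, -4, 1, 1, -5, -3, 0, 3, -2, 0, -1, 2;
    0, 0, 0, 0, 1, 1, -1, 0, 0, -1, 0, 0, 0, 0, 0, 0, 0;
    68, 328, 1, 4, -67, 70, -64, 1, 73, -137, -97, 0, 91, -56, -2, -27, 62;
    -10, -48, 0, 0, 10, -10, 9, 0, -11, 20, 14, 0, -14, 9, 0, 4, -9;
    -42, -203, -1, -3, 42, -42, 39, -1, -46, 84, 60, -1, -55, 34, 1, 17, -38;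
    35, 170, 1, 5, -35, 35, -33, 1, 38, -70, -50, 1, 45, -28, 0, -14, 32;
    -24, -117, -1, -3, 24, -24, 23, -1, -26, 48, 34, 0, -31, 19, 0, 9, -22;
    -9, -43, 0, 0, 9, -9, 8, 0, -10, 18, 13, 0, -12, 8, 0, 3, -8]

def matQinv : Matrix (Fin 17) (Fin 17) ℤ :=
  !![682, 96, 1054, 282, -197, 270, 602, -538, 300, -96, 9, -846, 96, 406, -340, 234, 86;
    142, 20, 218, 58, -40, 56, 124, -111, 62, -20, 2, -175, 20, 84, -70, 48, 18;
    0, 0, 16, 8, -4, 4, 12, -13, 6, -1, 0, -12, 0, 6, -10, 6, 0;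
    0, 0, 4, 2, -1, 1, 3, -3, 1, 0, 0, -3, 0, 2, -2, 2, 0;
    325, 46, 506, 136, -94, 130, 289, -259, 144, -46, 5, -406, 46, 195, -164, 113, 41;
    511, 72, 795, 214, -148, 205, 454, -407, 226, -72, 7, -638, 72, 306, -258, 178, 64;
    439, 62, 686, 185, -128, 177, 392, -352, 195, -62, 6, -550, 62, 264, -223, 154, 55;
    240, 34, 375, 101, -70, 97, 214, -192, 106, -33, 3, -301, 34, 144, -122, 84, 30;
    42, 6, 68, 19, -13, 18, 39, -35, 19, -6, 1, -55, 6, 26, -23, 16, 5;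
    397, 56, 615, 165, -114, 158, 351, -314, 175, -56, 5, -494, 56, 237, -199, 137, 50;
    193, 27, 296, 79, -55, 76, 169, -151, 84, -27, 3, -238, 26, 114, -95, 65, 25;
    185, 26, 283, 75, -52, 72, 162, -144, 80, -26, 3, -228, 24, 108, -90, 62, 24;
    56, 8, 87, 23, -16, 22, 50, -44, 24, -8, 1, -70, 6, 33, -28, 19, 8;
    120, 17, 179, 46, -33, 46, 101, -89, 50, -17, 2, -144, 16, 68, -56, 38, 16;
    63, 9, 92, 23, -17, 24, 51, -45, 26, -9, 1, -74, 8, 35, -28, 19, 8;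
    121, 17, 185, 49, -34, 47, 106, -94, 52, -17, 2, -149, 16, 71, -59, 40, 15;
    -65, -9, -99, -26, 18, -25, -56, 50, -28, 9, -1, 79, -9, -38, 32, -22, -8]

set_option maxRecDepth 1000000 in
set_option maxHeartbeats 4000000 in
theorem hP1 : matP * matPinv = 1 := by decide

set_option maxRecDepth 1000000 in
set_option maxHeartbeats 4000000 in
theorem hQ1 : matQ * matQinv = 1 := by decide

set_option maxRecDepth 1000000 in
set_option maxHeartbeats 4000000 in
theorem hP2 : matPᵀ * gramT * matP = gramT₁ := by decide

set_option maxRecDepth 1000000 in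
set_option maxHeartbeats 4000000 in
theorem hQ2 : matQᵀ * gramT * matQ = gramT₂ := by decide

/-- `T = U ⊕ U ⊕ E₈ ⊕ A₁⁵` is isometric to `U ⊕ U ⊕ E₇ ⊕ D₄ ⊕ A₁²` and to
`U ⊕ U ⊕ D₆² ⊕ A₁`. -/
theorem T_isometric_to_U_U_E7_D4_A1sq_and_U_U_D6sq_A1 :
    (∃ P : Matrix (Fin 17) (Fin 17) ℤ, IsUnit P.det ∧ Pᵀ * gramT * P = gramT₁) ∧
    (∃ Q : Matrix (Fin 17) (Fin 17) ℤ, IsUnit Q.det ∧ Qᵀ * gramT * Q = gramT₂) := by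
  exact ⟨⟨matP, Matrix.isUnit_det_of_right_inverse hP1, hP2⟩,
         ⟨matQ, Matrix.isUnit_det_of_right_inverse hQ1, hQ2⟩⟩
end
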